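/- arXiv:2107.12353 — 10 statements merged into one kernel-verified Lean document; each statement's English description precedes it below -/
import Mathlib

section
/- For all n ≥ 1, there is exactly one cyclic permutation of length n avoiding the vincular cyclic pattern [\overline{12}3], namely the cyclic class of the decreasing permutation n, n−1, …, 1. -/
/-- The position obtained from `p` by moving `k` steps forward cyclically. -/
def cyc {n : ℕ} (p : Fin n) (k : ℕ) : Fin n :=
  ⟨(p.val + k) % n, Nat.mod_lt _ p.pos⟩

/-- `σ` (as a cyclic permutation) contains the vincular cyclic pattern 12-3:
there is a cyclic ascent `σ p < σ (p+1)` and a later element (going once around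
the circle) larger than both. -/
def Contains12v3 {n : ℕ} (σ : Equiv.Perm (Fin n)) : Prop :=
  ∃ (p : Fin n) (k : ℕ), 2 ≤ k ∧ k < n ∧
    σ p < σ (cyc p 1) ∧ σ (cyc p 1) < σ (cyc p k)

/-- for `n ≥ 1`, the unique cyclic permutation of length `n` avoiding
the vincular cyclic pattern 12-3 is the cyclic class of the decreasing permutation
`n, n-1, …, 1`: taking in each cyclic class the rotation with minimum entry first,
`σ` avoids the pattern iff `σ j = (n - j) mod n` for all `j`. -/
theorem stmt1 (n : ℕ) (hn : 1 ≤ n) (σ : Equiv.Perm (Fin n)) :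
    (σ ⟨0, hn⟩ = ⟨0, hn⟩ ∧ ¬ Contains12v3 σ) ↔
      (∀ j : Fin n, (σ j).val = (n - j.val) % n) := by
  constructor
  · rintro ⟨h0, hav⟩
    rcases Nat.lt_or_ge n 2 with hn1 | hn2
    · have hn1' : n = 1 := by omega
      subst hn1'
      intro j
      have h1 := (σ j).isLt
      have h2 := j.isLt
      omega
    · have h1lt : 1 < n := hn2
      have hinj : Function.Injective σ := σ.injective
      have hpos : ∀ a : Fin n, a.val ≠ 0 → (σ a).val ≠ 0 := by
        intro a ha hc
        apply ha
        have e : σ a = σ ⟨0, hn⟩ := by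
          rw [h0]; exact Fin.ext hc
        have := hinj e
        rw [this]
      -- Step A : σ 1 = n - 1
      have hA : (σ ⟨1, h1lt⟩).val = n - 1 := by
        by_contra hA'
        have hle : (σ ⟨1, h1lt⟩).val < n - 1 := by
          have := (σ ⟨1, h1lt⟩).isLt; omega
        set q := σ.symm ⟨n - 1, by omega⟩ with hq
        have hσq : σ q = ⟨n - 1, by omega⟩ := σ.apply_symm_apply _
        have hq0 : q.val ≠ 0 := by
          intro hc
          have e : q = ⟨0, hn⟩ := Fin.ext hc
          rw [e, h0] at hσq
          have := congrArg Fin.val hσq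
          simp at this
          omega
        have hq1 : q.val ≠ 1 := by
          intro hc
          have e : q = ⟨1, h1lt⟩ := Fin.ext hc
          rw [e] at hσq
          rw [hσq] at hle
          simp at hle
        apply hav
        have e1 : cyc (⟨0, hn⟩ : Fin n) 1 = ⟨1, h1lt⟩ := by
          apply Fin.ext
          show (0 + 1) % n = 1
          rw [Nat.zero_add]
          exact Nat.mod_eq_of_lt h1lt
        have e2 : cyc (⟨0, hn⟩ : Fin n) q.val = q := by
          apply Fin.ext
          show (0 + q.val) % n = q.val
          rw [Nat.zero_add]
          exact Nat.mod_eq_of_lt q.isLt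
        refine ⟨⟨0, hn⟩, q.val, by omega, q.isLt, ?_, ?_⟩
        · rw [e1, h0]
          have := hpos ⟨1, h1lt⟩ (by simp)
          refine Fin.lt_def.mpr ?_
          show 0 < (σ ⟨1, h1lt⟩).val
          omega
        · rw [e1, e2, hσq]
          refine Fin.lt_def.mpr ?_
          show (σ ⟨1, h1lt⟩).val < n - 1
          exact hle
      -- Step B : descents everywhere except at position 0
      have hB : ∀ a b : Fin n, 1 ≤ a.val → b.val = a.val + 1 → (σ b).val < (σ a).val := by
        intro a b ha hb
        have hbl := b.isLt
        by_contra hc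
        push_neg at hc
        have hab : a ≠ b := by
          intro e; rw [e] at hb; omega
        have hσab : σ a ≠ σ b := fun e => hab (hinj e)
        have hlt : (σ a).val < (σ b).val :=
          lt_of_le_of_ne hc (fun hv => hσab (Fin.ext hv))
        have ha1 : a.val ≠ 1 := by
          intro he
          have e : a = ⟨1, h1lt⟩ := Fin.ext he
          rw [e, hA] at hlt
          have := (σ b).isLt
          omega
        have hne1 : (σ b).val ≠ n - 1 := by
          intro he
          have e : σ b = σ ⟨1, h1lt⟩ := Fin.ext (he.trans hA.symm)
          have := congrArg Fin.val (hinj e)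
          simp at this
          omega
        have hblt : (σ b).val < n - 1 := by
          have := (σ b).isLt; omega
        apply hav
        have hal := a.isLt
        have e1 : cyc a 1 = b := by
          apply Fin.ext
          show (a.val + 1) % n = b.val
          rw [hb]
          exact Nat.mod_eq_of_lt (by omega)
        have e2 : cyc a (n - a.val + 1) = ⟨1, h1lt⟩ := by
          apply Fin.ext
          show (a.val + (n - a.val + 1)) % n = 1
          have e : a.val + (n - a.val + 1) = n + 1 := by omega
          rw [e, Nat.add_mod_left]
          exact Nat.mod_eq_of_lt h1lt
        refine ⟨a, n - a.val + 1, by omega, by omega, ?_, ?_⟩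
        · rw [e1]
          exact Fin.lt_def.mpr hlt
        · rw [e1, e2]
          exact Fin.lt_def.mpr (by omega)
      -- upper bound
      have hub : ∀ j, ∀ a : Fin n, a.val = j → 1 ≤ j → (σ a).val ≤ n - j := by
        intro j
        induction j with
        | zero => intro a _ h; omega
        | succ m ih =>
          intro a ha _
          rcases Nat.eq_zero_or_pos m with hm | hm
          · subst hm
            have e : a = ⟨1, h1lt⟩ := Fin.ext ha
            rw [e, hA]
          · have hmlt : m < n := by have := a.isLt; omega
            have h1 := ih ⟨m, hmlt⟩ rfl hm
            have h2 := hB ⟨m, hmlt⟩ a hm ha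
            omega
      -- lower bound
      have hlb : ∀ d, ∀ a : Fin n, d + 2 ≤ n → a.val = n - 1 - d → d + 1 ≤ (σ a).val := by
        intro d
        induction d with
        | zero =>
          intro a hd ha
          have := hpos a (by omega)
          omega
        | succ m ih =>
          intro a hd ha
          have hbl : n - 1 - m < n := by omega
          have h1 := ih ⟨n - 1 - m, hbl⟩ (by omega) rfl
          have h2 := hB a ⟨n - 1 - m, hbl⟩ (by omega) (by show n - 1 - m = a.val + 1; omega)
          omega
      intro j
      have hjl := j.isLt
      rcases Nat.eq_zero_or_pos j.val with hj | hj
      · have e : j = ⟨0, hn⟩ := Fin.ext hj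
        rw [e, h0]
        show 0 = (n - 0) % n
        simp
      · have hu := hub j.val j rfl hj
        have hl := hlb (n - 1 - j.val) j (by omega) (by omega)
        rw [Nat.mod_eq_of_lt (by omega : n - j.val < n)]
        omega
  · intro h
    constructor
    · apply Fin.ext
      rw [h]
      simp
    · rintro ⟨p, k, hk2, hkn, h1, h2⟩
      have hn3 : 2 < n := lt_of_le_of_lt hk2 hkn
      have hpl := p.isLt
      simp only [Fin.lt_def, h, cyc] at h1 h2
      have hb : (n - (p.val + k) % n) % n < n := Nat.mod_lt _ (by omega)
      rcases Nat.lt_or_ge (p.val + 1) n with hq | hq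
      · rw [Nat.mod_eq_of_lt hq] at h1 h2
        by_cases hp0 : p.val = 0
        · have e1 : (n - (p.val + 1)) % n = n - 1 := by
            rw [hp0]
            exact Nat.mod_eq_of_lt (by omega)
          rw [e1] at h2
          omega
        · rw [Nat.mod_eq_of_lt (show n - p.val < n by omega),
              Nat.mod_eq_of_lt (show n - (p.val + 1) < n by omega)] at h1
          omega
      · have e0 : (p.val + 1) % n = 0 := by
          have e : p.val + 1 = n := by omega
          rw [e, Nat.mod_self]
        rw [e0, Nat.sub_zero, Nat.mod_self] at h1
        omega
end

section
/- For all n ≥ 1, there is exactly one cyclic permutation of length n avoiding the vincular cyclic pattern [\overline{31}2], namely the cyclic class of the decreasing permutation n, n−1, …, 1. -/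
/-- `σ` (as a cyclic permutation) contains the vincular cyclic pattern 31-2:
cyclically adjacent entries `a = σ p`, `b = σ (p+1)` and a later element `c`
(going once around the circle) with `b < c < a`. -/
def Contains31v2 {n : ℕ} (σ : Equiv.Perm (Fin n)) : Prop :=
  ∃ (p : Fin n) (k : ℕ), 2 ≤ k ∧ k < n ∧
    σ (cyc p 1) < σ (cyc p k) ∧ σ (cyc p k) < σ p

lemma cyc_val {n : ℕ} (p : Fin n) (k : ℕ) : (cyc p k).val = (p.val + k) % n := rfl

lemma cyc_cyc {n : ℕ} (p : Fin n) (a b : ℕ) : cyc (cyc p a) b = cyc p (a + b) := by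
  apply Fin.ext
  simp only [cyc_val]
  rw [Nat.mod_add_mod, Nat.add_assoc]

lemma cyc_zero {n : ℕ} (p : Fin n) : cyc p 0 = p := by
  apply Fin.ext
  simp [cyc_val, Nat.mod_eq_of_lt p.isLt]

lemma key {n : ℕ} (hn : 2 ≤ n) (σ : Equiv.Perm (Fin n)) (hA : ¬ Contains31v2 σ)
    (m : Fin n) (hm : (σ m).val = n - 1) :
    ∀ j, j < n → (σ (cyc m j)).val = n - 1 - j := by
  intro j
  induction j using Nat.strong_induction_on with
  | _ j ih =>
    intro hjn
    match j, hjn with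
    | 0, _ => rw [cyc_zero]; simpa using hm
    | (j+1), hjn =>
      have hmono : ∀ i, i ≤ j → (σ (cyc m i)).val = n - 1 - i := fun i hi =>
        ih i (by omega) (by omega)
      have hv : (σ (cyc m (j+1))).val = (σ (cyc m (j+1))).val := rfl
      set v := (σ (cyc m (j+1))).val with hvdef
      have hvlt : v < n := (σ _).isLt
      have hinj : ∀ i, i < n → cyc m i = cyc m (j+1) → i = j + 1 := by
        intro i hi h
        have h1 : (m.val + i) % n = (m.val + (j+1)) % n := congrArg Fin.val h
        have h2 : i % n = (j+1) % n := Nat.ModEq.add_left_cancel' m.val h1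
        rwa [Nat.mod_eq_of_lt hi, Nat.mod_eq_of_lt hjn] at h2
      have hvle : v < n - 1 - j := by
        by_contra hcon
        push_neg at hcon
        have hvle' : v ≤ n - 1 := by omega
        have hilej : n - 1 - v ≤ j := by omega
        have hval : (σ (cyc m (n - 1 - v))).val = v := by
          rw [hmono _ hilej]; omega
        have heq : σ (cyc m (n - 1 - v)) = σ (cyc m (j+1)) := Fin.ext (by rw [hval])
        have := hinj (n - 1 - v) (by omega) (σ.injective heq)
        omega
      -- claim v = n - 1 - (j+1)
      by_contra hne
      have hv1 : v + 1 < n - 1 - j := by omega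
      set q := σ.symm ⟨v + 1, by omega⟩ with hq
      have hσq : (σ q).val = v + 1 := by rw [hq, Equiv.apply_symm_apply]
      have hP1 : cyc (cyc m j) 1 = cyc m (j+1) := cyc_cyc m j 1
      have hPval : (σ (cyc m j)).val = n - 1 - j := hmono j le_rfl
      have hqP : q.val ≠ (cyc m j).val := by
        intro h
        have h' : q = cyc m j := Fin.ext h
        rw [h'] at hσq
        omega
      have hqP1 : q ≠ cyc m (j+1) := by
        intro h
        rw [h] at hσq
        omega
      have hqn : q.val < n := q.isLt
      have hPn : (cyc m j).val < n := (cyc m j).isLt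
      set k := if (cyc m j).val < q.val then q.val - (cyc m j).val
               else q.val + n - (cyc m j).val with hk
      have hk1 : 1 ≤ k ∧ k < n := by
        rw [hk]; split <;> omega
      have hmod : ((cyc m j).val + k) % n = q.val := by
        rw [hk]; split
        · rw [show (cyc m j).val + (q.val - (cyc m j).val) = q.val by omega,
            Nat.mod_eq_of_lt hqn]
        · rw [show (cyc m j).val + (q.val + n - (cyc m j).val) = q.val + n by omega,
            Nat.add_mod_right, Nat.mod_eq_of_lt hqn]
      have hcycPk : cyc (cyc m j) k = q := Fin.ext hmod
      have hkne1 : k ≠ 1 := by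
        intro h1
        rw [h1] at hcycPk
        exact hqP1 (hcycPk.symm.trans hP1)
      have hk2 : 2 ≤ k := by omega
      apply hA
      refine ⟨cyc m j, k, hk2, hk1.2, ?_, ?_⟩
      · rw [hP1, hcycPk, Fin.lt_def, hσq, ← hvdef]; omega
      · rw [hcycPk, Fin.lt_def, hσq, hPval]; omega

/-- for `n ≥ 1`, the unique cyclic permutation of length `n` avoiding
the vincular cyclic pattern 31-2 is the cyclic class of the decreasing permutation. -/
theorem stmt2 (n : ℕ) (hn : 1 ≤ n) (σ : Equiv.Perm (Fin n)) :
    (σ ⟨0, hn⟩ = ⟨0, hn⟩ ∧ ¬ Contains31v2 σ) ↔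
      (∀ j : Fin n, (σ j).val = (n - j.val) % n) := by
  constructor
  · rintro ⟨h0, hA⟩
    rcases Nat.lt_or_ge n 2 with h1 | h2
    · have hn1 : n = 1 := by omega
      subst hn1
      intro j
      have ha : (σ j).val < 1 := (σ j).isLt
      omega
    · set m := σ.symm ⟨n-1, by omega⟩ with hm
      have hσm : (σ m).val = n - 1 := by rw [hm, Equiv.apply_symm_apply]
      have key' := key h2 σ hA m hσm
      have hlast : (σ (cyc m (n-1))).val = 0 := by rw [key' (n-1) (by omega)]; omega
      have hcyc0 : cyc m (n-1) = ⟨0, hn⟩ := by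
        apply σ.injective
        apply Fin.ext
        rw [hlast, h0]
      have hmval : m.val = 1 := by
        have h := congrArg Fin.val hcyc0
        simp only [cyc_val] at h
        have hd : n ∣ (m.val + (n-1)) := Nat.dvd_of_mod_eq_zero h
        obtain ⟨c, hc⟩ := hd
        have hmlt : m.val < n := m.isLt
        have hclt : c < 2 := by
          by_contra hcge
          push_neg at hcge
          have := Nat.mul_le_mul_left n hcge
          omega
        have hcpos : 0 < c := by
          rcases Nat.eq_zero_or_pos c with h | h
          · subst h; omega
          · exact h
        have hc1 : c = 1 := by omega
        subst hc1
        omega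
      intro j
      rcases Nat.eq_zero_or_pos j.val with hj | hj
      · have hj0 : j = ⟨0, hn⟩ := Fin.ext hj
        rw [hj0, h0]
        simp [Nat.mod_self]
      · have hcycj : cyc m (j.val - 1) = j := by
          apply Fin.ext
          rw [cyc_val, hmval, show 1 + (j.val - 1) = j.val by omega,
            Nat.mod_eq_of_lt j.isLt]
        have h3 := key' (j.val - 1) (by omega)
        rw [hcycj] at h3
        rw [h3, Nat.mod_eq_of_lt (by omega : n - j.val < n)]
        omega
  · intro H
    constructor
    · apply Fin.ext
      rw [H ⟨0, hn⟩]
      simp [Nat.mod_self]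
    · rintro ⟨p, k, hk2, hkn, h1, h2⟩
      rw [Fin.lt_def] at h1 h2
      rw [H (cyc p 1)] at h1
      rw [H p] at h2
      simp only [cyc_val] at h1
      have hp : p.val < n := p.isLt
      have hn3 : 3 ≤ n := by omega
      rcases Nat.eq_zero_or_pos p.val with hp0 | hp0
      · rw [hp0, Nat.sub_zero, Nat.mod_self] at h2
        exact absurd h2 (Nat.not_lt_zero _)
      · rcases Nat.lt_or_ge p.val (n-1) with hplt | hpge
        · rw [Nat.mod_eq_of_lt (by omega : p.val + 1 < n),
            Nat.mod_eq_of_lt (by omega : n - (p.val + 1) < n)] at h1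
          rw [Nat.mod_eq_of_lt (by omega : n - p.val < n)] at h2
          omega
        · have hpn : p.val = n - 1 := by omega
          rw [hpn, show n - 1 + 1 = n by omega, Nat.mod_self, Nat.sub_zero,
            Nat.mod_self] at h1
          rw [hpn, show n - (n-1) = 1 by omega,
            Nat.mod_eq_of_lt (by omega : 1 < n)] at h2
          omega
end

section
/- For every n ≥ 3, no cyclic permutation of length n avoids both consecutive cyclic patterns [\overline{123}] and [\overline{132}]. -/
/-- Three cyclically consecutive entries order isomorphic to 123. -/
def Contains123c {n : ℕ} (σ : Equiv.Perm (Fin n)) : Prop :=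
  ∃ p : Fin n, σ p < σ (cyc p 1) ∧ σ (cyc p 1) < σ (cyc p 2)

/-- Three cyclically consecutive entries order isomorphic to 132. -/
def Contains132c {n : ℕ} (σ : Equiv.Perm (Fin n)) : Prop :=
  ∃ p : Fin n, σ p < σ (cyc p 2) ∧ σ (cyc p 2) < σ (cyc p 1)

/-- Three cyclically consecutive entries order isomorphic to 213. -/
def Contains213c {n : ℕ} (σ : Equiv.Perm (Fin n)) : Prop :=
  ∃ p : Fin n, σ (cyc p 1) < σ p ∧ σ p < σ (cyc p 2)

/-- Three cyclically consecutive entries order isomorphic to 231. -/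
def Contains231c {n : ℕ} (σ : Equiv.Perm (Fin n)) : Prop :=
  ∃ p : Fin n, σ (cyc p 2) < σ p ∧ σ p < σ (cyc p 1)

/-- Three cyclically consecutive entries order isomorphic to 321. -/
def Contains321c {n : ℕ} (σ : Equiv.Perm (Fin n)) : Prop :=
  ∃ p : Fin n, σ (cyc p 2) < σ (cyc p 1) ∧ σ (cyc p 1) < σ p

/-- for `n ≥ 3`, no cyclic permutation of length `n` avoids both
consecutive cyclic patterns 123 and 132. -/
theorem stmt3 (n : ℕ) (hn : 3 ≤ n) (σ : Equiv.Perm (Fin n)) :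
    Contains123c σ ∨ Contains132c σ := by
  have hn0 : 0 < n := by omega
  set p := σ.symm ⟨0, hn0⟩ with hp
  have hσp : σ p = ⟨0, hn0⟩ := Equiv.apply_symm_apply σ _
  have key : ∀ q : Fin n, q ≠ p → σ p < σ q := by
    intro q hq
    have hne : σ q ≠ σ p := fun h => hq (σ.injective h)
    have hle : σ p ≤ σ q := by rw [hσp]; exact Fin.mk_le_mk.mpr (Nat.zero_le _)
    exact lt_of_le_of_ne hle (Ne.symm hne)
  have h1 : cyc p 1 ≠ p := by
    intro h
    have := congrArg Fin.val h
    simp only [cyc] at this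
    rcases Nat.lt_or_ge (p.val + 1) n with h' | h'
    · rw [Nat.mod_eq_of_lt h'] at this; omega
    · have hp1 : p.val + 1 = n := by omega
      rw [hp1, Nat.mod_self] at this; omega
  have h2 : cyc p 2 ≠ p := by
    intro h
    have := congrArg Fin.val h
    simp only [cyc] at this
    have hplt := p.isLt
    rcases Nat.lt_or_ge (p.val + 2) n with h' | h'
    · rw [Nat.mod_eq_of_lt h'] at this; omega
    · have : (p.val + 2) % n = p.val + 2 - n := by
        rw [Nat.mod_eq_sub_mod h', Nat.mod_eq_of_lt (by omega)]
      omega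
  have h12 : cyc p 1 ≠ cyc p 2 := by
    intro h
    have := congrArg Fin.val h
    simp only [cyc] at this
    have hplt := p.isLt
    rcases Nat.lt_or_ge (p.val + 2) n with h' | h'
    · rw [Nat.mod_eq_of_lt (by omega), Nat.mod_eq_of_lt h'] at this; omega
    · rcases Nat.lt_or_ge (p.val + 1) n with h'' | h''
      · have e2 : (p.val + 2) % n = p.val + 2 - n := by
          rw [Nat.mod_eq_sub_mod h', Nat.mod_eq_of_lt (by omega)]
        rw [Nat.mod_eq_of_lt h'', e2] at this; omega
      · have hp1 : p.val + 1 = n := by omega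
        have e2 : (p.val + 2) % n = p.val + 2 - n := by
          rw [Nat.mod_eq_sub_mod (by omega), Nat.mod_eq_of_lt (by omega)]
        rw [hp1, Nat.mod_self, e2] at this; omega
  rcases lt_or_gt_of_ne (fun h => h12 (σ.injective h)) with hlt | hgt
  · exact Or.inl ⟨p, key _ h1, hlt⟩
  · exact Or.inr ⟨p, key _ h2, hgt⟩
end

section
/- For every even n ≥ 2, the number of cyclic permutations of length n avoiding both consecutive cyclic patterns [\overline{123}] and [\overline{321}] equals the number of up-down permutations of length n−1. -/
/- ========================= auxiliary material ========================= -/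

private def NiceAlt (m : ℕ) (ρ : Equiv.Perm (Fin m)) : Prop :=
  ∀ a b : Fin m, a.val + 1 = b.val →
    (Even a.val → ρ a < ρ b) ∧ (¬ Even a.val → ρ b < ρ a)

private lemma nice_iff_nat {m : ℕ} (ρ : Equiv.Perm (Fin m)) :
    (∀ i : ℕ, ∀ h : i + 1 < m,
      (Even i → ρ ⟨i, by omega⟩ < ρ ⟨i + 1, h⟩) ∧
      (¬ Even i → ρ ⟨i + 1, h⟩ < ρ ⟨i, by omega⟩)) ↔ NiceAlt m ρ := by
  constructor
  · intro h a b hab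
    have hb := b.isLt
    have h1 : a.val + 1 < m := by omega
    have := h a.val h1
    rwa [show (⟨a.val, by omega⟩ : Fin m) = a from Fin.ext rfl,
         show (⟨a.val + 1, h1⟩ : Fin m) = b from Fin.ext hab] at this
  · intro h i hi
    exact h ⟨i, by omega⟩ ⟨i + 1, hi⟩ rfl

private lemma sigma_pos {n : ℕ} (hn : 2 ≤ n) (σ : Equiv.Perm (Fin n))
    (h0 : σ ⟨0, Nat.zero_lt_two.trans_le hn⟩ = ⟨0, Nat.zero_lt_two.trans_le hn⟩) (x : Fin n) (hx : x.val ≠ 0) :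
    0 < (σ x).val := by
  rcases Nat.eq_zero_or_pos (σ x).val with h | h
  · exfalso
    apply hx
    have hx0 : σ x = σ ⟨0, Nat.zero_lt_two.trans_le hn⟩ := by rw [h0]; exact Fin.ext h
    have := σ.injective hx0
    rw [this]
  · exact h

private lemma key_s6 {n : ℕ} (hn : 2 ≤ n) (he : Even n) (σ : Equiv.Perm (Fin n))
    (h0 : σ ⟨0, Nat.zero_lt_two.trans_le hn⟩ = ⟨0, Nat.zero_lt_two.trans_le hn⟩) :
    (¬ Contains123c σ ∧ ¬ Contains321c σ) ↔ NiceAlt n σ := by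
  have h0' : ∀ pf : (0 : ℕ) < n, σ ⟨0, pf⟩ = ⟨0, pf⟩ := fun _ => h0
  constructor
  · rintro ⟨h123, h321⟩
    rw [← nice_iff_nat]
    intro i
    induction i with
    | zero =>
      intro h
      refine ⟨fun _ => ?_, fun hO => absurd Even.zero hO⟩
      have hp := sigma_pos hn σ h0 ⟨1, h⟩ one_ne_zero
      calc σ ⟨0, Nat.zero_lt_two.trans_le hn⟩ = ⟨0, Nat.zero_lt_two.trans_le hn⟩ := h0' _
        _ < σ ⟨1, h⟩ := hp
    | succ i ih =>
      intro h
      have h1 : i + 1 < n := by omega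
      have h2 : i + 2 < n := by omega
      have hi : i < n := by omega
      have hne : σ ⟨i + 1, h1⟩ ≠ σ ⟨i + 2, h2⟩ := fun hc => by
        have := σ.injective hc
        rw [Fin.mk.injEq] at this
        omega
      have e1 : cyc ⟨i, hi⟩ 1 = ⟨i + 1, h1⟩ := Fin.ext (Nat.mod_eq_of_lt h1)
      have e2 : cyc ⟨i, hi⟩ 2 = ⟨i + 2, h2⟩ := Fin.ext (Nat.mod_eq_of_lt h2)
      rcases Nat.even_or_odd i with hev | hod
      · have hprev := (ih h1).1 hev
        have hodd1 : ¬ Even (i + 1) := by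
          rw [Nat.even_add_one]
          exact not_not_intro hev
        refine ⟨fun hE => absurd hE hodd1, fun _ => ?_⟩
        by_contra hcon
        have hlt : σ ⟨i + 1, h1⟩ < σ ⟨i + 2, h2⟩ := by
          rcases hne.lt_or_gt with hx | hx
          · exact hx
          · exact absurd hx hcon
        exact h123 ⟨⟨i, hi⟩, by rw [e1]; exact hprev, by rw [e1, e2]; exact hlt⟩
      · have hodd : ¬ Even i := by
          rw [Nat.even_iff]
          rw [Nat.odd_iff] at hod
          omega
        have hprev := (ih h1).2 hodd
        have heven1 : Even (i + 1) := Nat.even_add_one.mpr hodd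
        refine ⟨fun _ => ?_, fun hO => absurd heven1 hO⟩
        by_contra hcon
        have hlt : σ ⟨i + 2, h2⟩ < σ ⟨i + 1, h1⟩ := by
          rcases hne.lt_or_gt with hx | hx
          · exact absurd hx hcon
          · exact hx
        exact h321 ⟨⟨i, hi⟩, by rw [e1, e2]; exact hlt, by rw [e1]; exact hprev⟩
  · intro hnice
    constructor
    · rintro ⟨⟨q, hq⟩, hp1, hp2⟩
      by_cases hc1 : q + 1 = n
      · have e1 : cyc ⟨q, hq⟩ 1 = ⟨0, Nat.zero_lt_two.trans_le hn⟩ :=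
          Fin.ext (show (q + 1) % n = 0 by rw [hc1, Nat.mod_self])
        rw [e1, h0'] at hp1
        exact Nat.not_lt_zero _ hp1
      by_cases hc2 : q + 2 = n
      · have h1 : q + 1 < n := by omega
        have e2 : cyc ⟨q, hq⟩ 2 = ⟨0, Nat.zero_lt_two.trans_le hn⟩ :=
          Fin.ext (show (q + 2) % n = 0 by rw [hc2, Nat.mod_self])
        rw [e2, h0'] at hp2
        exact Nat.not_lt_zero _ hp2
      · have h1 : q + 1 < n := by omega
        have h2 : q + 2 < n := by omega
        have e1 : cyc ⟨q, hq⟩ 1 = ⟨q + 1, h1⟩ := Fin.ext (Nat.mod_eq_of_lt h1)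
        have e2 : cyc ⟨q, hq⟩ 2 = ⟨q + 2, h2⟩ := Fin.ext (Nat.mod_eq_of_lt h2)
        rw [e1] at hp1
        rw [e1, e2] at hp2
        rcases Nat.even_or_odd q with hev | hod
        · have := (hnice ⟨q + 1, h1⟩ ⟨q + 2, h2⟩ rfl).2
            (by rw [Nat.even_add_one]; exact not_not_intro hev)
          exact absurd hp2 (lt_asymm this)
        · have hodd : ¬ Even q := by
            rw [Nat.even_iff]; rw [Nat.odd_iff] at hod; omega
          have := (hnice ⟨q, hq⟩ ⟨q + 1, h1⟩ rfl).2 hodd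
          exact absurd hp1 (lt_asymm this)
    · rintro ⟨⟨q, hq⟩, hp1, hp2⟩
      by_cases hc1 : q + 1 = n
      · have e1 : cyc ⟨q, hq⟩ 1 = ⟨0, Nat.zero_lt_two.trans_le hn⟩ :=
          Fin.ext (show (q + 1) % n = 0 by rw [hc1, Nat.mod_self])
        rw [e1, h0'] at hp1
        exact Nat.not_lt_zero _ hp1
      by_cases hc2 : q + 2 = n
      · have h1 : q + 1 < n := by omega
        have e1 : cyc ⟨q, hq⟩ 1 = ⟨q + 1, h1⟩ := Fin.ext (Nat.mod_eq_of_lt h1)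
        rw [e1] at hp2
        have hevq : Even q := by
          obtain ⟨k, hk⟩ := he
          exact ⟨k - 1, by omega⟩
        have := (hnice ⟨q, hq⟩ ⟨q + 1, h1⟩ rfl).1 hevq
        exact absurd hp2 (lt_asymm this)
      · have h1 : q + 1 < n := by omega
        have h2 : q + 2 < n := by omega
        have e1 : cyc ⟨q, hq⟩ 1 = ⟨q + 1, h1⟩ := Fin.ext (Nat.mod_eq_of_lt h1)
        have e2 : cyc ⟨q, hq⟩ 2 = ⟨q + 2, h2⟩ := Fin.ext (Nat.mod_eq_of_lt h2)
        rw [e1, e2] at hp1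
        rw [e1] at hp2
        rcases Nat.even_or_odd q with hev | hod
        · have := (hnice ⟨q, hq⟩ ⟨q + 1, h1⟩ rfl).1 hev
          exact absurd hp2 (lt_asymm this)
        · have hevq1 : Even (q + 1) := Nat.even_add_one.mpr
            (by rw [Nat.even_iff]; rw [Nat.odd_iff] at hod; omega)
          have := (hnice ⟨q + 1, h1⟩ ⟨q + 2, h2⟩ rfl).1 hevq1
          exact absurd hp1 (lt_asymm this)

/- ============ the bijection ============ -/

private def emb (n : ℕ) (i : Fin (n - 1)) : Fin n :=
  ⟨i.val + 1, by have := i.isLt; omega⟩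

private def demb (n : ℕ) (j : Fin n) (hj : j.val ≠ 0) : Fin (n - 1) :=
  ⟨j.val - 1, by have := j.isLt; omega⟩

private def Fmap {n : ℕ} (hn : 2 ≤ n) (σ : Equiv.Perm (Fin n))
    (h0 : σ ⟨0, Nat.zero_lt_two.trans_le hn⟩ = ⟨0, Nat.zero_lt_two.trans_le hn⟩) : Fin (n - 1) → Fin (n - 1) := fun i =>
  ⟨n - 1 - (σ (emb n i)).val, by
    have h1 := (σ (emb n i)).isLt
    have h2 := sigma_pos hn σ h0 (emb n i) (Nat.succ_ne_zero _)
    omega⟩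

private lemma Fmap_inj {n : ℕ} (hn : 2 ≤ n) (σ : Equiv.Perm (Fin n))
    (h0 : σ ⟨0, Nat.zero_lt_two.trans_le hn⟩ = ⟨0, Nat.zero_lt_two.trans_le hn⟩) : Function.Injective (Fmap hn σ h0) := by
  intro a b hab
  have h := congrArg Fin.val hab
  simp only [Fmap] at h
  have ha1 := (σ (emb n a)).isLt
  have hb1 := (σ (emb n b)).isLt
  have ha2 := sigma_pos hn σ h0 (emb n a) (Nat.succ_ne_zero _)
  have hb2 := sigma_pos hn σ h0 (emb n b) (Nat.succ_ne_zero _)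
  have hveq : (σ (emb n a)).val = (σ (emb n b)).val := by omega
  have heq := σ.injective (Fin.ext hveq)
  have := congrArg Fin.val heq
  simp only [emb] at this
  exact Fin.ext (by omega)

private noncomputable def Fperm {n : ℕ} (hn : 2 ≤ n) (σ : Equiv.Perm (Fin n))
    (h0 : σ ⟨0, Nat.zero_lt_two.trans_le hn⟩ = ⟨0, Nat.zero_lt_two.trans_le hn⟩) : Equiv.Perm (Fin (n - 1)) :=
  Equiv.ofBijective _ (Finite.injective_iff_bijective.mp (Fmap_inj hn σ h0))

private def Gmap {n : ℕ} (hn : 2 ≤ n) (τ : Equiv.Perm (Fin (n - 1))) : Fin n → Fin n :=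
  fun j =>
    if h : j.val = 0 then ⟨0, Nat.zero_lt_two.trans_le hn⟩
    else ⟨n - 1 - (τ (demb n j h)).val, by have := (τ (demb n j h)).isLt; omega⟩

private lemma Gmap_zero {n : ℕ} (hn : 2 ≤ n) (τ : Equiv.Perm (Fin (n - 1)))
    (j : Fin n) (hj : j.val = 0) : Gmap hn τ j = ⟨0, Nat.zero_lt_two.trans_le hn⟩ := by
  unfold Gmap
  rw [dif_pos hj]

private lemma Gmap_pos {n : ℕ} (hn : 2 ≤ n) (τ : Equiv.Perm (Fin (n - 1)))
    (j : Fin n) (hj : j.val ≠ 0) :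
    (Gmap hn τ j).val = n - 1 - (τ (demb n j hj)).val := by
  unfold Gmap
  rw [dif_neg hj]

private lemma Gmap_inj {n : ℕ} (hn : 2 ≤ n) (τ : Equiv.Perm (Fin (n - 1))) :
    Function.Injective (Gmap hn τ) := by
  intro a b hab
  have h := congrArg Fin.val hab
  by_cases ha : a.val = 0 <;> by_cases hb : b.val = 0
  · exact Fin.ext (by omega)
  · exfalso
    rw [Gmap_zero hn τ a ha, Gmap_pos hn τ b hb] at h
    have := (τ (demb n b hb)).isLt
    simp at h
    omega
  · exfalso
    rw [Gmap_pos hn τ a ha, Gmap_zero hn τ b hb] at h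
    have := (τ (demb n a ha)).isLt
    simp at h
    omega
  · rw [Gmap_pos hn τ a ha, Gmap_pos hn τ b hb] at h
    have h1 := (τ (demb n a ha)).isLt
    have h2 := (τ (demb n b hb)).isLt
    have heq : τ (demb n a ha) = τ (demb n b hb) := Fin.ext (by omega)
    have := congrArg Fin.val (τ.injective heq)
    simp only [demb] at this
    exact Fin.ext (by omega)

private noncomputable def Gperm {n : ℕ} (hn : 2 ≤ n) (τ : Equiv.Perm (Fin (n - 1))) :
    Equiv.Perm (Fin n) :=
  Equiv.ofBijective _ (Finite.injective_iff_bijective.mp (Gmap_inj hn τ))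

private lemma Gperm_zero {n : ℕ} (hn : 2 ≤ n) (τ : Equiv.Perm (Fin (n - 1))) :
    Gperm hn τ ⟨0, Nat.zero_lt_two.trans_le hn⟩ = ⟨0, Nat.zero_lt_two.trans_le hn⟩ := by
  show Gmap hn τ ⟨0, Nat.zero_lt_two.trans_le hn⟩ = ⟨0, Nat.zero_lt_two.trans_le hn⟩
  exact Gmap_zero hn τ ⟨0, Nat.zero_lt_two.trans_le hn⟩ rfl

private lemma Fperm_nice {n : ℕ} (hn : 2 ≤ n) (σ : Equiv.Perm (Fin n))
    (h0 : σ ⟨0, Nat.zero_lt_two.trans_le hn⟩ = ⟨0, Nat.zero_lt_two.trans_le hn⟩) (hal : NiceAlt n σ) :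
    NiceAlt (n - 1) (Fperm hn σ h0) := by
  intro a b hab
  have hembv : (emb n a).val + 1 = (emb n b).val := by
    show a.val + 1 + 1 = b.val + 1
    omega
  have h' := hal (emb n a) (emb n b) hembv
  have hA := (σ (emb n a)).isLt
  have hB := (σ (emb n b)).isLt
  have hApos := sigma_pos hn σ h0 (emb n a) (Nat.succ_ne_zero _)
  have hBpos := sigma_pos hn σ h0 (emb n b) (Nat.succ_ne_zero _)
  constructor
  · intro hev
    have hodd : ¬ Even (emb n a).val := by
      show ¬ Even (a.val + 1)
      rw [Nat.even_add_one]
      exact not_not_intro hev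
    have hlt : (σ (emb n b)).val < (σ (emb n a)).val := h'.2 hodd
    show Fmap hn σ h0 a < Fmap hn σ h0 b
    rw [Fin.lt_def]
    show n - 1 - (σ (emb n a)).val < n - 1 - (σ (emb n b)).val
    omega
  · intro hodd
    have hevs : Even (emb n a).val := by
      show Even (a.val + 1)
      exact Nat.even_add_one.mpr hodd
    have hlt : (σ (emb n a)).val < (σ (emb n b)).val := h'.1 hevs
    show Fmap hn σ h0 b < Fmap hn σ h0 a
    rw [Fin.lt_def]
    show n - 1 - (σ (emb n b)).val < n - 1 - (σ (emb n a)).val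
    omega

private lemma Gperm_nice {n : ℕ} (hn : 2 ≤ n) (τ : Equiv.Perm (Fin (n - 1)))
    (hal : NiceAlt (n - 1) τ) : NiceAlt n (Gperm hn τ) := by
  intro a b hab
  have hbne : b.val ≠ 0 := by omega
  have hvb := Gmap_pos hn τ b hbne
  have hBlt := (τ (demb n b hbne)).isLt
  by_cases ha : a.val = 0
  · refine ⟨fun _ => ?_, fun hO => absurd (by rw [ha]; exact Even.zero) hO⟩
    show Gmap hn τ a < Gmap hn τ b
    rw [Fin.lt_def, hvb, Gmap_zero hn τ a ha]
    show 0 < n - 1 - (τ (demb n b hbne)).val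
    omega
  · have hva := Gmap_pos hn τ a ha
    have hAlt := (τ (demb n a ha)).isLt
    have hd : (demb n a ha).val + 1 = (demb n b hbne).val := by
      show a.val - 1 + 1 = b.val - 1
      omega
    have h' := hal (demb n a ha) (demb n b hbne) hd
    constructor
    · intro hev
      have hpar : ¬ Even ((demb n a ha).val) := by
        show ¬ Even (a.val - 1)
        rw [Nat.even_iff] at hev ⊢
        omega
      have hlt : (τ (demb n b hbne)).val < (τ (demb n a ha)).val := h'.2 hpar
      show Gmap hn τ a < Gmap hn τ b
      rw [Fin.lt_def, hva, hvb]
      omega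
    · intro hodd
      have hpar : Even ((demb n a ha).val) := by
        show Even (a.val - 1)
        rw [Nat.even_iff] at hodd ⊢
        omega
      have hlt : (τ (demb n a ha)).val < (τ (demb n b hbne)).val := h'.1 hpar
      show Gmap hn τ b < Gmap hn τ a
      rw [Fin.lt_def, hva, hvb]
      omega

private lemma GF_id {n : ℕ} (hn : 2 ≤ n) (σ : Equiv.Perm (Fin n))
    (h0 : σ ⟨0, Nat.zero_lt_two.trans_le hn⟩ = ⟨0, Nat.zero_lt_two.trans_le hn⟩) (j : Fin n) :
    Gperm hn (Fperm hn σ h0) j = σ j := by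
  by_cases hj : j.val = 0
  · have hj' : j = ⟨0, Nat.zero_lt_two.trans_le hn⟩ := Fin.ext hj
    rw [hj', h0]
    show Gmap hn (Fperm hn σ h0) ⟨0, Nat.zero_lt_two.trans_le hn⟩ = ⟨0, Nat.zero_lt_two.trans_le hn⟩
    exact Gmap_zero hn _ ⟨0, Nat.zero_lt_two.trans_le hn⟩ rfl
  · apply Fin.ext
    show (Gmap hn (Fperm hn σ h0) j).val = (σ j).val
    rw [Gmap_pos hn _ j hj]
    have hev : emb n (demb n j hj) = j := Fin.ext (by show j.val - 1 + 1 = j.val; omega)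
    have hFv : (Fperm hn σ h0 (demb n j hj)).val = n - 1 - (σ j).val := by
      show n - 1 - (σ (emb n (demb n j hj))).val = n - 1 - (σ j).val
      rw [hev]
    rw [hFv]
    have h1 := (σ j).isLt
    have h2 := sigma_pos hn σ h0 j hj
    omega

private lemma FG_id {n : ℕ} (hn : 2 ≤ n) (τ : Equiv.Perm (Fin (n - 1))) (j : Fin (n - 1)) :
    Fperm hn (Gperm hn τ) (Gperm_zero hn τ) j = τ j := by
  apply Fin.ext
  show n - 1 - ((Gperm hn τ) (emb n j)).val = (τ j).val
  have hne : (emb n j).val ≠ 0 := Nat.succ_ne_zero _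
  rw [show ((Gperm hn τ) (emb n j)).val = (Gmap hn τ (emb n j)).val from rfl,
      Gmap_pos hn τ _ hne]
  have hde : demb n (emb n j) hne = j := Fin.ext (by show j.val + 1 - 1 = j.val; omega)
  rw [hde]
  have := (τ j).isLt
  omega

private noncomputable def mainEquiv (n : ℕ) (hn : 2 ≤ n) :
    {σ : Equiv.Perm (Fin n) // σ ⟨0, Nat.zero_lt_two.trans_le hn⟩ = ⟨0, Nat.zero_lt_two.trans_le hn⟩ ∧ NiceAlt n σ} ≃
    {τ : Equiv.Perm (Fin (n - 1)) // NiceAlt (n - 1) τ} where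
  toFun s := ⟨Fperm hn s.1 s.2.1, Fperm_nice hn s.1 s.2.1 s.2.2⟩
  invFun t := ⟨Gperm hn t.1, Gperm_zero hn t.1, Gperm_nice hn t.1 t.2⟩
  left_inv s := Subtype.ext (Equiv.ext fun j => GF_id hn s.1 s.2.1 j)
  right_inv t := Subtype.ext (Equiv.ext fun j => FG_id hn t.1 j)

/-- for even `n ≥ 2`, the number of cyclic permutations of length `n`
(counted via the unique rotation placing the entry `0` first) avoiding both
consecutive cyclic patterns 123 and 321 equals the number of up-down permutations
of length `n - 1`. -/
theorem stmt6 (n : ℕ) (hn : 2 ≤ n) (he : Even n) :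
    Nat.card {σ : Equiv.Perm (Fin n) //
        σ ⟨0, by omega⟩ = ⟨0, by omega⟩ ∧ ¬ Contains123c σ ∧ ¬ Contains321c σ} =
    Nat.card {τ : Equiv.Perm (Fin (n - 1)) //
        ∀ i : ℕ, ∀ h : i + 1 < n - 1,
          (Even i → τ ⟨i, by omega⟩ < τ ⟨i + 1, h⟩) ∧
          (¬ Even i → τ ⟨i + 1, h⟩ < τ ⟨i, by omega⟩)} := by
  refine Nat.card_congr ?_
  refine (Equiv.subtypeEquivRight fun σ => and_congr_right fun h0 => key_s6 hn he σ h0).trans ?_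
  refine (mainEquiv n hn).trans ?_
  exact Equiv.subtypeEquivRight fun τ => (nice_iff_nat τ).symm
end

section
/- For all n ≥ 1, the number of cyclic permutations of length n+2 avoiding all three consecutive cyclic patterns [\overline{132}], [\overline{213}], [\overline{321}] equals the number of total cyclic orders Z on the set {1,…,n+2} such that (i, i+1, i+2) ∈ Z for all 1 ≤ i ≤ n, and (n+1, n+2, 1) ∈ Z and (n+2, 1, 2) ∈ Z. -/
/-- A total cyclic order on `X`: a ternary relation satisfying cyclicity,
antisymmetry, transitivity, and totality on distinct triples. -/
def IsTotalCyclicOrder {X : Type*} (Z : X → X → X → Prop) : Prop :=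
  (∀ x y z, Z x y z → Z y z x) ∧
  (∀ x y z, Z x y z → ¬ Z z y x) ∧
  (∀ x y z u, Z x y z → Z x z u → Z x y u) ∧
  (∀ x y z, x ≠ y → y ≠ z → x ≠ z → (Z x y z ∨ Z z y x))

namespace S7
open Finset

/-- standard cyclic order on Fin m -/
def C {m : ℕ} (x y z : Fin m) : Prop :=
  (x < y ∧ y < z) ∨ (y < z ∧ z < x) ∨ (z < x ∧ x < y)

lemma C_iff {m : ℕ} {x y z : Fin m} : C x y z ↔
    ((x:ℕ) < y ∧ (y:ℕ) < z) ∨ ((y:ℕ) < z ∧ (z:ℕ) < x) ∨ ((z:ℕ) < x ∧ (x:ℕ) < y) := by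
  rfl

lemma C_total {m : ℕ} : IsTotalCyclicOrder (C (m := m)) := by
  refine ⟨?_, ?_, ?_, ?_⟩
  · intro x y z h; rw [C_iff] at *; omega
  · intro x y z h; rw [C_iff] at *; omega
  · intro x y z u h1 h2; rw [C_iff] at *; omega
  · intro x y z hxy hyz hxz
    have h1 : (x:ℕ) ≠ y := fun h => hxy (Fin.ext h)
    have h2 : (y:ℕ) ≠ z := fun h => hyz (Fin.ext h)
    have h3 : (x:ℕ) ≠ z := fun h => hxz (Fin.ext h)
    rw [C_iff, C_iff]; omega

section
variable {X : Type*} {Z : X → X → X → Prop} (hZ : IsTotalCyclicOrder Z)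
include hZ

lemma not_Z_xyx (x y : X) : ¬ Z x y x := fun h => hZ.2.1 x y x h h

lemma not_Z_xxy (x y : X) : ¬ Z x x y := fun h => not_Z_xyx hZ x y (hZ.1 _ _ _ h)

lemma not_Z_xyy (x y : X) : ¬ Z x y y := fun h => not_Z_xyx hZ y x (hZ.1 _ _ _ (hZ.1 _ _ _ h))

lemma Z_ne {x y z : X} (h : Z x y z) : x ≠ y ∧ y ≠ z ∧ x ≠ z := by
  refine ⟨?_, ?_, ?_⟩ <;> rintro rfl
  · exact not_Z_xxy hZ x z h
  · exact not_Z_xyy hZ x y h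
  · exact not_Z_xyx hZ x y h

lemma Z_of_chain {x a b c : X} (h1 : Z x a b) (h2 : Z x b c) : Z a b c := by
  obtain ⟨hxa, hab, hxb⟩ := Z_ne hZ h1
  obtain ⟨-, hbc, hxc⟩ := Z_ne hZ h2
  have hac : a ≠ c := by
    rintro rfl
    exact hZ.2.1 _ _ _ h1 (hZ.1 _ _ _ h2)
  rcases hZ.2.2.2 a b c hab hbc hac with h | h
  · exact h
  · -- h : Z c b a, derive contradiction
    exfalso
    have hbac : Z b a c := hZ.1 _ _ _ h
    have hbcx : Z b c x := hZ.1 _ _ _ h2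
    have hbax : Z b a x := hZ.2.2.1 _ _ _ _ hbac hbcx
    exact hZ.2.1 _ _ _ hbax h1

end

noncomputable def fZ {m : ℕ} [NeZero m] (Z : Fin m → Fin m → Fin m → Prop) (a : Fin m) : ℕ :=
  if a = 0 then 0 else 1 + {b : Fin m | Z 0 b a}.ncard

section
variable {m : ℕ} [NeZero m] {Z : Fin m → Fin m → Fin m → Prop} (hZ : IsTotalCyclicOrder Z)
include hZ

lemma fZ_mono {a b : Fin m} (hb : b ≠ 0) (h : Z 0 a b) : fZ Z a < fZ Z b := by
  obtain ⟨h0a, hab, h0b⟩ := Z_ne hZ h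
  rcases eq_or_ne a 0 with rfl | ha
  · simp only [fZ, if_pos rfl, if_neg hb]; omega
  · simp only [fZ, if_neg ha, if_neg hb]
    have hss : {c : Fin m | Z 0 c a} ⊂ {c : Fin m | Z 0 c b} := by
      constructor
      · intro c hc
        exact hZ.2.2.1 _ _ _ _ hc h
      · intro hsub
        exact not_Z_xyy hZ 0 a (hsub h)
    have := Set.ncard_lt_ncard hss (Set.toFinite _)
    omega

lemma fZ_lt (a : Fin m) : fZ Z a < m := by
  have hm1 : 1 ≤ m := Nat.pos_of_ne_zero (NeZero.ne m)
  rcases eq_or_ne a 0 with rfl | ha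
  · simp only [fZ, if_pos]; omega
  · simp only [fZ, if_neg ha]
    have hm2 : 2 ≤ m := by
      rcases Nat.lt_or_ge m 2 with h | h
      · interval_cases m
        exact absurd (Subsingleton.elim a 0) ha
      · exact h
    have hsub : {b : Fin m | Z 0 b a} ⊆ ({0, a} : Set (Fin m))ᶜ := by
      intro c hc
      obtain ⟨h1, h2, -⟩ := Z_ne hZ hc
      simp only [Set.mem_compl_iff, Set.mem_insert_iff, Set.mem_singleton_iff]
      push_neg
      exact ⟨Ne.symm h1, h2⟩
    have h1 := Set.ncard_le_ncard hsub (Set.toFinite _)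
    have h2 := Set.ncard_add_ncard_compl ({0, a} : Set (Fin m))
    rw [Set.ncard_pair (Ne.symm ha)] at h2
    simp only [Set.ncard_univ, Nat.card_eq_fintype_card, Fintype.card_fin] at h2
    omega

omit hZ in
lemma fZ_eq_zero {a : Fin m} : fZ Z a = 0 ↔ a = 0 := by
  rcases eq_or_ne a 0 with rfl | ha
  · simp [fZ]
  · simp [fZ, ha]

lemma fZ_inj : Function.Injective (fZ Z) := by
  intro a b hab
  by_contra hne
  rcases eq_or_ne a 0 with rfl | ha
  · have h : fZ Z b = 0 := by rw [← hab]; simp [fZ]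
    exact hne ((fZ_eq_zero).mp h).symm
  rcases eq_or_ne b 0 with rfl | hb
  · have h : fZ Z a = 0 := by rw [hab]; simp [fZ]
    exact hne ((fZ_eq_zero).mp h)
  rcases hZ.2.2.2 0 a b (Ne.symm ha) hne (Ne.symm hb) with h | h
  · exact absurd hab (Nat.ne_of_lt (fZ_mono hZ hb h))
  · exact absurd hab.symm (Nat.ne_of_lt (fZ_mono hZ ha (hZ.1 _ _ _ (hZ.1 _ _ _ h))))

lemma Z_of_lt {a b : Fin m} (ha : a ≠ 0) (hb : b ≠ 0) (hne : a ≠ b)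
    (h : fZ Z a < fZ Z b) : Z 0 a b := by
  rcases hZ.2.2.2 0 a b (Ne.symm ha) hne (Ne.symm hb) with h' | h'
  · exact h'
  · exact absurd (fZ_mono hZ ha (hZ.1 _ _ _ (hZ.1 _ _ _ h'))) (by omega)

omit hZ in
lemma fZ_zero : fZ Z (0 : Fin m) = 0 := by simp [fZ]

omit hZ in
lemma fZ_pos {a : Fin m} (ha : a ≠ 0) : 0 < fZ Z a := by
  have := (not_iff_not.mpr (fZ_eq_zero (Z := Z) (a := a))).mpr ha
  omega

lemma tot2 {x y : Fin m} (hx : x ≠ 0) (hy : y ≠ 0) (hxy : x ≠ y) :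
    Z 0 x y ∨ Z 0 y x := by
  rcases hZ.2.2.2 0 x y (Ne.symm hx) hxy (Ne.symm hy) with h | h
  · exact Or.inl h
  · exact Or.inr (hZ.1 _ _ _ (hZ.1 _ _ _ h))

noncomputable def sigmaZ : Equiv.Perm (Fin m) :=
  Equiv.ofBijective (fun a => (⟨fZ Z a, fZ_lt hZ a⟩ : Fin m))
    (Finite.injective_iff_bijective.mp (fun a b hab => fZ_inj hZ (by
      simpa using congrArg Fin.val hab)))

lemma sigmaZ_val (a : Fin m) : ((sigmaZ hZ a : Fin m) : ℕ) = fZ Z a := rfl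

lemma C_sigmaZ_iff (a b c : Fin m) :
    C (sigmaZ hZ a) (sigmaZ hZ b) (sigmaZ hZ c) ↔ Z a b c := by
  rw [C_iff, sigmaZ_val, sigmaZ_val, sigmaZ_val]
  by_cases hab : a = b
  · subst hab
    constructor
    · intro h; omega
    · intro h; exact absurd h (not_Z_xxy hZ _ _)
  by_cases hbc : b = c
  · subst hbc
    constructor
    · intro h; omega
    · intro h; exact absurd h (not_Z_xyy hZ _ _)
  by_cases hac : a = c
  · subst hac
    constructor
    · intro h
      have h1 := fZ_inj hZ (show fZ Z a = fZ Z b by omega)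
      exact absurd h1 hab
    · intro h; exact absurd h (not_Z_xyx hZ _ _)
  rcases eq_or_ne a 0 with rfl | ha
  · rw [fZ_zero]
    have hb := fZ_pos (Z := Z) (Ne.symm hab)
    have hc := fZ_pos (Z := Z) (Ne.symm hac)
    constructor
    · intro h
      exact Z_of_lt hZ (Ne.symm hab) (Ne.symm hac) hbc (by omega)
    · intro h
      exact Or.inl ⟨by omega, fZ_mono hZ (Ne.symm hac) h⟩
  rcases eq_or_ne b 0 with rfl | hb
  · rw [fZ_zero]
    have ha' := fZ_pos (Z := Z) ha
    have hc := fZ_pos (Z := Z) (Ne.symm hbc)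
    have key : fZ Z c < fZ Z a ↔ Z a 0 c := by
      constructor
      · intro h
        exact hZ.1 _ _ _ (hZ.1 _ _ _ (Z_of_lt hZ (Ne.symm hbc) ha (Ne.symm hac) h))
      · intro h
        exact fZ_mono hZ ha (hZ.1 _ _ _ h)
    rw [← key]; omega
  rcases eq_or_ne c 0 with rfl | hc
  · rw [fZ_zero]
    have ha' := fZ_pos (Z := Z) ha
    have hb' := fZ_pos (Z := Z) hb
    have key : fZ Z a < fZ Z b ↔ Z a b 0 := by
      constructor
      · intro h
        exact hZ.1 _ _ _ (Z_of_lt hZ ha hb hab h)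
      · intro h
        exact fZ_mono hZ hb (hZ.1 _ _ _ (hZ.1 _ _ _ h))
    rw [← key]; omega
  -- all distinct and nonzero
  constructor
  · intro h
    rcases h with ⟨h1, h2⟩ | ⟨h1, h2⟩ | ⟨h1, h2⟩
    · exact Z_of_chain hZ (Z_of_lt hZ ha hb hab h1) (Z_of_lt hZ hb hc hbc h2)
    · exact hZ.1 _ _ _ (hZ.1 _ _ _
        (Z_of_chain hZ (Z_of_lt hZ hb hc hbc h1) (Z_of_lt hZ hc ha (Ne.symm hac) h2)))
    · exact hZ.1 _ _ _
        (Z_of_chain hZ (Z_of_lt hZ hc ha (Ne.symm hac) h1) (Z_of_lt hZ ha hb hab h2))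
  · intro h
    rcases tot2 hZ ha hb hab with h1 | h1 <;>
      rcases tot2 hZ hb hc hbc with h2 | h2 <;>
      rcases tot2 hZ ha hc hac with h3 | h3
    · exact Or.inl ⟨fZ_mono hZ hb h1, fZ_mono hZ hc h2⟩
    · exact absurd (hZ.1 _ _ _ h3) (hZ.2.1 _ _ _ (hZ.2.2.1 _ _ _ _ h1 h2))
    · exact absurd (hZ.1 _ _ _ (Z_of_chain hZ h3 h2)) (hZ.2.1 _ _ _ h)
    · exact Or.inr (Or.inr ⟨fZ_mono hZ ha h3, fZ_mono hZ hb h1⟩)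
    · exact absurd (hZ.1 _ _ _ (hZ.1 _ _ _ (Z_of_chain hZ h1 h3))) (hZ.2.1 _ _ _ h)
    · exact Or.inr (Or.inl ⟨fZ_mono hZ hc h2, fZ_mono hZ ha h3⟩)
    · exact absurd (hZ.1 _ _ _ h3) (hZ.2.1 _ _ _ (hZ.2.2.1 _ _ _ _ h2 h1))
    · exact absurd (Z_of_chain hZ h2 h1) (hZ.2.1 _ _ _ h)

end

lemma C_perm_total {m : ℕ} (σ : Equiv.Perm (Fin m)) :
    IsTotalCyclicOrder (fun a b c => C (σ a) (σ b) (σ c)) := by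
  refine ⟨?_, ?_, ?_, ?_⟩
  · intro x y z h; exact C_total.1 _ _ _ h
  · intro x y z h; exact C_total.2.1 _ _ _ h
  · intro x y z u h1 h2; exact C_total.2.2.1 _ _ _ _ h1 h2
  · intro x y z hxy hyz hxz
    exact C_total.2.2.2 _ _ _ (fun e => hxy (σ.injective e)) (fun e => hyz (σ.injective e))
      (fun e => hxz (σ.injective e))

lemma fZ_C_perm {m : ℕ} [NeZero m] (σ : Equiv.Perm (Fin m)) (h0 : σ 0 = 0) (a : Fin m) :
    fZ (fun x y z => C (σ x) (σ y) (σ z)) a = ((σ a : Fin m) : ℕ) := by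
  rcases eq_or_ne a 0 with rfl | ha
  · rw [fZ_zero, h0, Fin.val_zero]
  · have hσa : ((σ a : Fin m) : ℕ) ≠ 0 := by
      intro h
      exact ha (σ.injective (by rw [h0]; exact Fin.ext (by rw [h, Fin.val_zero])))
    simp only [fZ, if_neg ha]
    have hset : {b : Fin m | C (σ 0) (σ b) (σ a)} = ⇑σ ⁻¹' (Set.Ioo 0 (σ a)) := by
      ext b
      simp only [Set.mem_setOf_eq, Set.mem_preimage, Set.mem_Ioo, C_iff, h0,
        Fin.lt_def, Fin.val_zero]
      omega
    have himg : ⇑σ ⁻¹' (Set.Ioo 0 (σ a)) = ⇑σ.symm '' (Set.Ioo 0 (σ a)) := by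
      rw [Equiv.image_eq_preimage_symm]
      simp
    rw [hset, himg, Set.ncard_image_of_injective _ σ.symm.injective,
      ← Finset.coe_Ioo, Set.ncard_coe_finset, Fin.card_Ioo, Fin.val_zero]
    omega

lemma cyc_ne {m : ℕ} (hm : 3 ≤ m) (p : Fin m) :
    cyc p 1 ≠ p ∧ cyc p 2 ≠ p ∧ cyc p 1 ≠ cyc p 2 := by
  have hp := p.2
  have key : ∀ k, k ≤ m → ((p.val + k) % m = p.val + k ∨ (p.val + k) % m + m = p.val + k) := by
    intro k hk
    rcases Nat.lt_or_ge (p.val + k) m with h | h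
    · exact Or.inl (Nat.mod_eq_of_lt h)
    · refine Or.inr ?_
      rw [Nat.mod_eq_sub_mod h, Nat.mod_eq_of_lt (by omega)]
      omega
  have k1 := key 1 (by omega)
  have k2 := key 2 (by omega)
  refine ⟨fun h => ?_, fun h => ?_, fun h => ?_⟩
  · have h' : (p.val + 1) % m = p.val := congrArg Fin.val h
    rcases k1 with k1 | k1 <;> omega
  · have h' : (p.val + 2) % m = p.val := congrArg Fin.val h
    rcases k2 with k2 | k2 <;> omega
  · have h' : (p.val + 1) % m = (p.val + 2) % m := congrArg Fin.val h
    rcases k1 with k1 | k1 <;> rcases k2 with k2 | k2 <;> omega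

lemma avoid_iff {m : ℕ} (hm : 3 ≤ m) (σ : Equiv.Perm (Fin m)) :
    (¬ Contains132c σ ∧ ¬ Contains213c σ ∧ ¬ Contains321c σ) ↔
    ∀ p : Fin m, C (σ p) (σ (cyc p 1)) (σ (cyc p 2)) := by
  constructor
  · rintro ⟨h132, h213, h321⟩ p
    obtain ⟨d1, d2, d3⟩ := cyc_ne hm p
    have e1 : ((σ (cyc p 1) : Fin m) : ℕ) ≠ ((σ p : Fin m) : ℕ) :=
      fun h => d1 (σ.injective (Fin.ext h))
    have e2 : ((σ (cyc p 2) : Fin m) : ℕ) ≠ ((σ p : Fin m) : ℕ) :=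
      fun h => d2 (σ.injective (Fin.ext h))
    have e3 : ((σ (cyc p 1) : Fin m) : ℕ) ≠ ((σ (cyc p 2) : Fin m) : ℕ) :=
      fun h => d3 (σ.injective (Fin.ext h))
    have f1 : ¬(((σ p : Fin m) : ℕ) < ((σ (cyc p 2) : Fin m) : ℕ) ∧
        ((σ (cyc p 2) : Fin m) : ℕ) < ((σ (cyc p 1) : Fin m) : ℕ)) :=
      fun h => h132 ⟨p, h.1, h.2⟩
    have f2 : ¬(((σ (cyc p 1) : Fin m) : ℕ) < ((σ p : Fin m) : ℕ) ∧
        ((σ p : Fin m) : ℕ) < ((σ (cyc p 2) : Fin m) : ℕ)) :=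
      fun h => h213 ⟨p, h.1, h.2⟩
    have f3 : ¬(((σ (cyc p 2) : Fin m) : ℕ) < ((σ (cyc p 1) : Fin m) : ℕ) ∧
        ((σ (cyc p 1) : Fin m) : ℕ) < ((σ p : Fin m) : ℕ)) :=
      fun h => h321 ⟨p, h.1, h.2⟩
    rw [C_iff]
    omega
  · intro h
    refine ⟨?_, ?_, ?_⟩ <;> rintro ⟨p, h1, h2⟩ <;> have hc := h p <;> rw [C_iff] at hc <;>
      rw [Fin.lt_def] at h1 h2 <;> omega

end S7

/-- the number of cyclic permutations of length `n + 2` (counted via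
the unique rotation placing the entry `0` first) avoiding the consecutive cyclic
patterns 132, 213 and 321 equals the number of total cyclic orders `Z` on
`Fin (n+2)` containing all cyclically consecutive triples `(j, j+1, j+2)`. -/
theorem stmt7 (n : ℕ) (hn : 1 ≤ n) :
    Nat.card {σ : Equiv.Perm (Fin (n + 2)) //
        σ 0 = 0 ∧ ¬ Contains132c σ ∧ ¬ Contains213c σ ∧ ¬ Contains321c σ} =
    Nat.card {Z : Fin (n + 2) → Fin (n + 2) → Fin (n + 2) → Prop //
        IsTotalCyclicOrder Z ∧ ∀ j : Fin (n + 2), Z j (cyc j 1) (cyc j 2)} := by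
  have hm : 3 ≤ n + 2 := by omega
  apply Nat.card_congr
  refine
    { toFun := fun σ => ⟨fun a b c => S7.C (σ.1 a) (σ.1 b) (σ.1 c),
        S7.C_perm_total σ.1, fun j => (S7.avoid_iff hm σ.1).mp σ.2.2 j⟩
      invFun := fun Z => ⟨S7.sigmaZ Z.2.1, ?_, ?_⟩
      left_inv := ?_
      right_inv := ?_ }
  · exact Fin.ext (by rw [S7.sigmaZ_val, S7.fZ_zero, Fin.val_zero])
  · exact (S7.avoid_iff hm _).mpr fun p =>
      (S7.C_sigmaZ_iff Z.2.1 p (cyc p 1) (cyc p 2)).mpr (Z.2.2 p)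
  · rintro ⟨σ, h0, hav⟩
    apply Subtype.ext
    apply Equiv.ext
    intro a
    exact Fin.ext (by rw [S7.sigmaZ_val, S7.fZ_C_perm σ h0])
  · rintro ⟨Z, hZ, htr⟩
    apply Subtype.ext
    funext a b c
    exact propext (S7.C_sigmaZ_iff hZ a b c)
end

section
/- A cyclic permutation [σ] of length n avoids the vincular cyclic pattern [\overline{12}43] if and only if for every cyclic ascent of [σ], say from a to b with a < b, the element b belongs to the reverse Zeilberger set of [σ] (i.e., reading once around the circle starting from b, the elements greater than b appear in increasing order). -/
/-- Contains the vincular cyclic pattern 12-43: entries \`a = σ p\`, \`b = σ (p+1)\`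
cyclically adjacent, followed (going once around the circle) by \`c = σ (p+k)\` and
then \`d = σ (p+l)\` with \`a < b < d < c\`. -/
def Contains1243 {n : ℕ} (σ : Equiv.Perm (Fin n)) : Prop :=
  ∃ (p : Fin n) (k l : ℕ), 2 ≤ k ∧ k < l ∧ l < n ∧
    σ p < σ (cyc p 1) ∧ σ (cyc p 1) < σ (cyc p l) ∧ σ (cyc p l) < σ (cyc p k)

lemma cyc_n {n : ℕ} (p : Fin n) : cyc p n = p := by
  unfold cyc
  apply Fin.ext
  simp [Nat.add_mod_right, Nat.mod_eq_of_lt p.isLt]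

lemma cyc_ne {n : ℕ} (p : Fin n) {a k l : ℕ} (hkl : k < l) (hl : l < n) :
    cyc p (a + k) ≠ cyc p (a + l) := by
  intro h
  have hv : (p.val + (a + k)) % n = (p.val + (a + l)) % n := congrArg Fin.val h
  have hme : p.val + a + k ≡ p.val + a + l [MOD n] := by
    unfold Nat.ModEq; simpa [Nat.add_assoc] using hv
  have h2 : k ≡ l [MOD n] := Nat.ModEq.add_left_cancel' _ hme
  have hd : n ∣ l - k := (Nat.modEq_iff_dvd' (le_of_lt hkl)).mp h2
  have : n ≤ l - k := Nat.le_of_dvd (Nat.sub_pos_of_lt hkl) hd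
  omega

/-- a cyclic permutation avoids the vincular cyclic pattern 12-43
iff for every cyclic ascent `σ p < σ (p+1)`, reading once around the circle
starting from `b = σ (p+1)`, the elements greater than `b` appear in increasing
order (i.e. `b` lies in the reverse Zeilberger set). -/
theorem stmt10 (n : ℕ) (σ : Equiv.Perm (Fin n)) :
    ¬ Contains1243 σ ↔
      ∀ p : Fin n, σ p < σ (cyc p 1) →
        ∀ k l : ℕ, k < l → l < n →
          σ (cyc p 1) < σ (cyc (cyc p 1) k) →
          σ (cyc p 1) < σ (cyc (cyc p 1) l) →
          σ (cyc (cyc p 1) k) < σ (cyc (cyc p 1) l) := by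
  constructor
  · intro hav p hasc k l hkl hln hk hl
    simp only [cyc_cyc] at hk hl ⊢
    -- rule out k = 0
    rcases Nat.eq_zero_or_pos k with rfl | hk0
    · simp at hk
    -- rule out l = n - 1
    rcases eq_or_lt_of_le (Nat.succ_le_of_lt hln) with hl1 | hl1
    · exfalso
      have : (1 : ℕ) + l = n := by omega
      rw [this, cyc_n] at hl
      exact absurd (hl.trans hasc) (lt_irrefl _)
    -- trichotomy
    rcases lt_trichotomy (σ (cyc p (1 + k))) (σ (cyc p (1 + l))) with h | h | h
    · exact h
    · exact absurd (σ.injective h) (cyc_ne p hkl hln)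
    · exfalso
      exact hav ⟨p, 1 + k, 1 + l, by omega, by omega, by omega, hasc, hl, h⟩
  · rintro H ⟨p, k, l, hk2, hkl, hln, hasc, hbl, hlk⟩
    have hk' : k - 1 < l - 1 := by omega
    have hl' : l - 1 < n := by omega
    have hbk : σ (cyc p 1) < σ (cyc p k) := hbl.trans hlk
    have := H p hasc (k - 1) (l - 1) hk' hl'
      (by rw [cyc_cyc]; have : 1 + (k - 1) = k := by omega
          rw [this]; exact hbk)
      (by rw [cyc_cyc]; have : 1 + (l - 1) = l := by omega
          rw [this]; exact hbl)
    rw [cyc_cyc, cyc_cyc] at this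
    have e1 : 1 + (k - 1) = k := by omega
    have e2 : 1 + (l - 1) = l := by omega
    rw [e1, e2] at this
    exact absurd hlk (not_lt_of_gt this)
end

section
/- For all positive integers k and all 1 ≤ i ≤ k, the set Π_{i,k} of all consecutive cyclic patterns of length k with a 1 in position i is a minimal unavoidable set: it is unavoidable, but for every π ∈ S_k with π_i = 1, the set Π_{i,k} \ {π} is avoidable, i.e., for every n ≥ k there exists a cyclic permutation of length n containing no pattern from Π_{i,k} \ {π} as a consecutive cyclic pattern. -/
/-- The window of `k` cyclically consecutive entries of `σ` starting at position
`p` is order isomorphic to the pattern `π`. -/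
def WindowIso {n k : ℕ} (σ : Equiv.Perm (Fin n)) (p : Fin n)
    (π : Equiv.Perm (Fin k)) : Prop :=
  ∀ a b : Fin k, (σ (cyc p a.val) < σ (cyc p b.val) ↔ π a < π b)

lemma mod_cancel {n x a b : ℕ} (ha : a < n) (hb : b < n)
    (h : (x + a) % n = (x + b) % n) : a = b := by
  have h1 : x + a ≡ x + b [MOD n] := h
  have h2 : a ≡ b [MOD n] := Nat.ModEq.add_left_cancel' x h1
  simpa [Nat.ModEq, Nat.mod_eq_of_lt ha, Nat.mod_eq_of_lt hb] using h2

lemma mod_red {n x t : ℕ} (ht : t < n) (h : x = t ∨ x = t + n ∨ x = t + n + n) :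
    x % n = t := by
  rcases h with h | h | h <;> subst h <;>
    simp [Nat.add_mod_right, Nat.mod_eq_of_lt ht]

lemma strictMono_le_self {k : ℕ} {g : Fin k → Fin k} (hg : StrictMono g) :
    ∀ x, x ≤ g x := by
  have H : ∀ m, ∀ x : Fin k, x.val ≤ m → x ≤ g x := by
    intro m
    induction m with
    | zero =>
      intro x hx
      rw [Fin.le_def]; omega
    | succ m ih =>
      intro x hx
      rcases Nat.eq_zero_or_pos x.val with h0 | h0
      · rw [Fin.le_def]; omega
      · have hy : (⟨x.val - 1, by omega⟩ : Fin k) < x := by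
          rw [Fin.lt_def]; simp; omega
        have h1 := hg hy
        have h2 := ih ⟨x.val - 1, by omega⟩ (by simp; omega)
        rw [Fin.lt_def] at h1
        rw [Fin.le_def] at h2 ⊢
        simp at h1 h2
        omega
  exact fun x => H x.val x le_rfl

lemma perm_eq_of_lt_iff {k : ℕ} (ρ π : Equiv.Perm (Fin k))
    (h : ∀ a b, ρ a < ρ b ↔ π a < π b) : ρ = π := by
  set τ : Equiv.Perm (Fin k) := π.symm.trans ρ with hτ
  have hmono : StrictMono (τ : Fin k → Fin k) := by
    intro a b hab
    have h1 : π (π.symm a) < π (π.symm b) := by simpa using hab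
    have h2 := (h (π.symm a) (π.symm b)).mpr h1
    simpa [hτ] using h2
  have hmono' : StrictMono (τ.symm : Fin k → Fin k) := by
    intro a b hab
    rcases lt_trichotomy (τ.symm a) (τ.symm b) with h' | h' | h'
    · exact h'
    · exfalso
      have : a = b := by
        have := congrArg τ h'
        simpa using this
      exact absurd this hab.ne
    · exfalso
      have := hmono h'
      simp at this
      exact absurd hab (not_lt.mpr this.le)
  have h1 := strictMono_le_self hmono
  have h2 := strictMono_le_self hmono'
  have hid : ∀ x, τ x = x := by
    intro x
    have := h2 (τ x)
    simp at this
    exact le_antisymm this (h1 x)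
  apply Equiv.ext
  intro x
  have := hid (π x)
  simpa [hτ] using this

lemma key_s16 {k i n : ℕ} (hi : 1 ≤ i) (hik : i ≤ k) (hkn : k ≤ n)
    (π : Equiv.Perm (Fin k)) (f : ℕ → ℕ)
    (hbound : ∀ x, x < n → f x < n)
    (hinj : ∀ x, x < n → ∀ y, y < n → f x = f y → x = y)
    (hblock : ∀ a b : Fin k, (f a.val < f b.val ↔ π a < π b))
    (hL : ∀ q, q < n → q ≠ i - 1 →
      ∃ b, b < k ∧ f ((q + (n - (i - 1)) + b) % n) < f q) :
    ∃ σ : Equiv.Perm (Fin n),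
      ∀ ρ : Equiv.Perm (Fin k), (ρ ⟨i - 1, by omega⟩).val = 0 → ρ ≠ π →
        ∀ p : Fin n, ¬ WindowIso σ p ρ := by
  have hn : 0 < n := by omega
  have hdn : i - 1 < n := by omega
  have hdk : i - 1 < k := by omega
  set F : Fin n → Fin n := fun x => ⟨f x.val, hbound _ x.isLt⟩ with hF
  have Finj : Function.Injective F := by
    intro x y hxy
    exact Fin.ext (hinj _ x.isLt _ y.isLt (congrArg Fin.val hxy))
  refine ⟨Equiv.ofBijective F (Finite.injective_iff_bijective.mp Finj), ?_⟩
  set σ : Equiv.Perm (Fin n) := Equiv.ofBijective F (Finite.injective_iff_bijective.mp Finj) with hσ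
  have hσv : ∀ x : Fin n, (σ x).val = f x.val := fun x => rfl
  intro ρ hρ hne p hiso
  have hmin : ∀ b : Fin k, f ((p.val + (i - 1)) % n) ≤ f ((p.val + b.val) % n) := by
    intro b
    by_contra hlt
    push_neg at hlt
    have h1 : σ (cyc p (⟨b.val, b.isLt⟩ : Fin k).val) < σ (cyc p (⟨i - 1, hdk⟩ : Fin k).val) := by
      rw [Fin.lt_def, hσv, hσv]
      exact hlt
    have h2 := (hiso ⟨b.val, b.isLt⟩ ⟨i - 1, hdk⟩).mp h1
    rw [Fin.lt_def] at h2
    have h3 : (ρ (⟨i - 1, hdk⟩ : Fin k)).val = 0 := hρ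
    omega
  have hq : (p.val + (i - 1)) % n = i - 1 := by
    by_contra hne2
    obtain ⟨b, hbk, hlt⟩ := hL ((p.val + (i - 1)) % n) (Nat.mod_lt _ hn) hne2
    have hmem : ((p.val + (i - 1)) % n + (n - (i - 1)) + b) % n = (p.val + b) % n := by
      rw [add_assoc, Nat.mod_add_mod]
      have h4 : p.val + (i - 1) + (n - (i - 1) + b) = p.val + b + n := by omega
      rw [h4, Nat.add_mod_right]
    rw [hmem] at hlt
    exact absurd hlt (not_lt.mpr (hmin ⟨b, hbk⟩))
  have hp0 : p.val = 0 := by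
    apply mod_cancel p.isLt hn (x := i - 1)
    have h5 : (i - 1) + p.val = p.val + (i - 1) := by omega
    rw [h5, hq, add_zero, Nat.mod_eq_of_lt hdn]
  have hiso2 : ∀ a b : Fin k, ρ a < ρ b ↔ π a < π b := by
    intro a b
    rw [← hiso a b, ← hblock a b]
    rw [Fin.lt_def, hσv, hσv]
    have ha : (cyc p a.val).val = a.val := by
      show (p.val + a.val) % n = a.val
      rw [hp0, Nat.zero_add, Nat.mod_eq_of_lt (by omega)]
    have hb : (cyc p b.val).val = b.val := by
      show (p.val + b.val) % n = b.val
      rw [hp0, Nat.zero_add, Nat.mod_eq_of_lt (by omega)]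
    rw [ha, hb]
  exact hne (perm_eq_of_lt_iff ρ π hiso2)

/-- for `1 ≤ i ≤ k`, the set `Π_{i,k}` of consecutive cyclic
patterns of length `k` with minimum in position `i` is a minimal unavoidable set:
it is unavoidable, but removing any single pattern `π` from it yields a set
avoided by some cyclic permutation of every length `n ≥ k`. -/
theorem stmt16 (k i : ℕ) (hi : 1 ≤ i) (hik : i ≤ k) :
    (∀ n, k ≤ n → ∀ σ : Equiv.Perm (Fin n),
      ∃ (p : Fin n) (π : Equiv.Perm (Fin k)),
        (π ⟨i - 1, by omega⟩).val = 0 ∧ WindowIso σ p π) ∧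
    (∀ π : Equiv.Perm (Fin k), (π ⟨i - 1, by omega⟩).val = 0 →
      ∀ n, k ≤ n → ∃ σ : Equiv.Perm (Fin n),
        ∀ ρ : Equiv.Perm (Fin k), (ρ ⟨i - 1, by omega⟩).val = 0 → ρ ≠ π →
          ∀ p : Fin n, ¬ WindowIso σ p ρ) := by
  constructor
  · -- Part 1 : unavoidability
    intro n hkn σ
    have hk : 0 < k := by omega
    have hn : 0 < n := by omega
    set p0 : Fin n := σ.symm ⟨0, hn⟩ with hp0
    set p : Fin n := cyc p0 (n - (i - 1)) with hp
    set g : Fin k → Fin n := fun a => σ (cyc p a.val) with hg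
    have hginj : Function.Injective g := by
      intro a b hab
      have h1 : cyc p a.val = cyc p b.val := σ.injective hab
      have h2 := congrArg Fin.val h1
      exact Fin.ext (mod_cancel (lt_of_lt_of_le a.isLt hkn) (lt_of_lt_of_le b.isLt hkn) h2)
    set s : Finset (Fin n) := Finset.image g Finset.univ with hs
    have hcard : s.card = k := by
      rw [hs, Finset.card_image_of_injective _ hginj, Finset.card_univ, Fintype.card_fin]
    set e := s.orderIsoOfFin hcard with he
    have hmem : ∀ a : Fin k, g a ∈ s := fun a => Finset.mem_image_of_mem _ (Finset.mem_univ a)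
    set u : Fin k → Fin k := fun a => e.symm ⟨g a, hmem a⟩ with hu
    have huinj : Function.Injective u := by
      intro a b hab
      have h1 : (⟨g a, hmem a⟩ : {x // x ∈ s}) = ⟨g b, hmem b⟩ := e.symm.injective hab
      exact hginj (by simpa using h1)
    set π : Equiv.Perm (Fin k) := Equiv.ofBijective u (Finite.injective_iff_bijective.mp huinj) with hπ
    have hlt : ∀ a b : Fin k, π a < π b ↔ g a < g b := by
      intro a b
      show u a < u b ↔ _
      rw [hu]
      simp only []
      rw [OrderIso.lt_iff_lt e.symm]
      exact Subtype.mk_lt_mk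
    have hgmineq : g ⟨i - 1, by omega⟩ = ⟨0, hn⟩ := by
      show σ (cyc p (i - 1)) = _
      have h1 : cyc p (i - 1) = p0 := by
        apply Fin.ext
        show ((p0.val + (n - (i - 1))) % n + (i - 1)) % n = p0.val
        rw [Nat.mod_add_mod]
        have h2 : p0.val + (n - (i - 1)) + (i - 1) = p0.val + n := by omega
        rw [h2, Nat.add_mod_right, Nat.mod_eq_of_lt p0.isLt]
      rw [h1, hp0, Equiv.apply_symm_apply]
    have hgmin : ∀ b : Fin k, g ⟨i - 1, by omega⟩ ≤ g b := by
      intro b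
      rw [hgmineq, Fin.le_def]
      exact Nat.zero_le _
    refine ⟨p, π, ?_, ?_⟩
    · have h1 : ∀ b : Fin k, π ⟨i - 1, by omega⟩ ≤ π b := by
        intro b
        by_contra hc
        push_neg at hc
        have h2 := (hlt b ⟨i - 1, by omega⟩).mp hc
        exact absurd h2 (not_lt.mpr (hgmin b))
      have h2 := h1 (π.symm ⟨0, hk⟩)
      rw [Equiv.apply_symm_apply, Fin.le_def] at h2
      simp at h2
      exact h2
    · intro a b
      exact (hlt a b).symm
  · -- Part 2 : minimality
    intro π hπ n hkn
    have hk : 0 < k := by omega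
    have hdk : i - 1 < k := by omega
    by_cases hk1 : k = 1
    · subst hk1
      refine ⟨Equiv.refl _, ?_⟩
      intro ρ hρ hne p hiso
      exact hne (by apply Equiv.ext; intro x; exact Subsingleton.elim _ _)
    have hk2 : 2 ≤ k := by omega
    have hπd : (π ⟨i - 1, hdk⟩).val = 0 := hπ
    have hπpos : ∀ x (hx : x < k), x ≠ i - 1 → 0 < (π ⟨x, hx⟩).val := by
      intro x hx hxd
      rcases Nat.eq_zero_or_pos (π ⟨x, hx⟩).val with h0 | h0
      · exfalso
        have h1 : π ⟨x, hx⟩ = π ⟨i - 1, hdk⟩ := Fin.ext (by rw [h0, hπd])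
        exact hxd (congrArg Fin.val (π.injective h1))
      · exact h0
    by_cases hmid : 2 * i = k + 1
    · -- Design 1 : f = π on the block, identity on the rest
      have hi2 : 2 ≤ i := by omega
      apply key_s16 hi hik hkn π (fun x => if h : x < k then (π ⟨x, h⟩).val else x)
      · intro x hx
        by_cases h : x < k
        · rw [dif_pos h]; have := (π ⟨x, h⟩).isLt; omega
        · rw [dif_neg h]; exact hx
      · intro x hx y hy hf
        by_cases h1 : x < k <;> by_cases h2 : y < k
        · rw [dif_pos h1, dif_pos h2] at hf
          exact congrArg Fin.val (π.injective (Fin.ext hf))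
        · rw [dif_pos h1, dif_neg h2] at hf
          have := (π ⟨x, h1⟩).isLt; omega
        · rw [dif_neg h1, dif_pos h2] at hf
          have := (π ⟨y, h2⟩).isLt; omega
        · rw [dif_neg h1, dif_neg h2] at hf; exact hf
      · intro a b
        rw [dif_pos a.isLt, dif_pos b.isLt]
        simp only [Fin.eta]
        exact Fin.lt_def.symm
      · intro q hq hqd
        by_cases hqk : q < k
        · refine ⟨2 * (i - 1) - q, by omega, ?_⟩
          have hmm : (q + (n - (i - 1)) + (2 * (i - 1) - q)) % n = i - 1 :=
            mod_red (by omega) (by omega)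
          rw [hmm, dif_pos hdk, dif_pos hqk]
          have := hπpos q hqk hqd
          omega
        · refine ⟨i - 2, by omega, ?_⟩
          have hmm : (q + (n - (i - 1)) + (i - 2)) % n = q - 1 :=
            mod_red (by omega) (by omega)
          rw [hmm, dif_neg hqk]
          by_cases hq1 : q - 1 < k
          · rw [dif_pos hq1]; have := (π ⟨q - 1, hq1⟩).isLt; omega
          · rw [dif_neg hq1]; omega
    by_cases hnk : n = k
    · -- Design T : n = k, f = π on the block (which is everything)
      apply key_s16 hi hik hkn π (fun x => if h : x < k then (π ⟨x, h⟩).val else x)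
      · intro x hx
        have hxk : x < k := by omega
        rw [dif_pos hxk]
        have := (π ⟨x, hxk⟩).isLt; omega
      · intro x hx y hy hf
        have hxk : x < k := by omega
        have hyk : y < k := by omega
        rw [dif_pos hxk, dif_pos hyk] at hf
        exact congrArg Fin.val (π.injective (Fin.ext hf))
      · intro a b
        rw [dif_pos a.isLt, dif_pos b.isLt]
        simp only [Fin.eta]
        exact Fin.lt_def.symm
      · intro q hq hqd
        have hqk : q < k := by omega
        have hn : 0 < n := by omega
        have hbn : (2 * (i - 1) + n - q) % n < n := Nat.mod_lt _ hn
        refine ⟨(2 * (i - 1) + n - q) % n, by omega, ?_⟩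
        have hmm : (q + (n - (i - 1)) + (2 * (i - 1) + n - q) % n) % n = i - 1 := by
          rw [Nat.add_mod_mod]
          exact mod_red (by omega) (by omega)
        rw [hmm, dif_pos hdk, dif_pos hqk]
        have := hπpos q hqk hqd
        omega
    have hnk' : k < n := by omega
    by_cases hlow : 2 * i ≤ k
    · -- Design 3 : top values on the block, decreasing run
      apply key_s16 hi hik hkn π
        (fun x => if x = i - 1 then 0 else if h : x < k then n - k + (π ⟨x, h⟩).val else n - x)
      · intro x hx
        by_cases h1 : x = i - 1
        · rw [if_pos h1]; omega
        rw [if_neg h1]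
        by_cases h2 : x < k
        · rw [dif_pos h2]; have := (π ⟨x, h2⟩).isLt; omega
        · rw [dif_neg h2]; omega
      · intro x hx y hy hf
        by_cases hx1 : x = i - 1 <;> by_cases hy1 : y = i - 1
        · omega
        · exfalso
          rw [if_pos hx1, if_neg hy1] at hf
          by_cases hy2 : y < k
          · rw [dif_pos hy2] at hf
            have := hπpos y hy2 hy1; omega
          · rw [dif_neg hy2] at hf; omega
        · exfalso
          rw [if_neg hx1, if_pos hy1] at hf
          by_cases hx2 : x < k
          · rw [dif_pos hx2] at hf
            have := hπpos x hx2 hx1; omega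
          · rw [dif_neg hx2] at hf; omega
        · rw [if_neg hx1, if_neg hy1] at hf
          by_cases hx2 : x < k <;> by_cases hy2 : y < k
          · rw [dif_pos hx2, dif_pos hy2] at hf
            have h3 : (π ⟨x, hx2⟩).val = (π ⟨y, hy2⟩).val := by omega
            exact congrArg Fin.val (π.injective (Fin.ext h3))
          · rw [dif_pos hx2, dif_neg hy2] at hf
            have := hπpos x hx2 hx1; omega
          · rw [dif_neg hx2, dif_pos hy2] at hf
            have := hπpos y hy2 hy1; omega
          · rw [dif_neg hx2, dif_neg hy2] at hf; omega
      · intro a b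
        by_cases ha1 : a.val = i - 1 <;> by_cases hb1 : b.val = i - 1
        · have hA : a = ⟨i - 1, hdk⟩ := Fin.ext ha1
          have hB : b = ⟨i - 1, hdk⟩ := Fin.ext hb1
          rw [hA, hB]
          exact iff_of_false (lt_irrefl _) (lt_irrefl _)
        · have hA : a = ⟨i - 1, hdk⟩ := Fin.ext ha1
          rw [if_pos ha1, if_neg hb1, dif_pos b.isLt]
          have h1 := hπpos b.val b.isLt hb1
          rw [Fin.eta] at h1
          have h2 : (π a).val = 0 := by rw [hA]; exact hπd
          simp only [Fin.lt_def, Fin.eta]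
          omega
        · have hB : b = ⟨i - 1, hdk⟩ := Fin.ext hb1
          rw [if_neg ha1, if_pos hb1, dif_pos a.isLt]
          have h1 := hπpos a.val a.isLt ha1
          rw [Fin.eta] at h1
          have h2 : (π b).val = 0 := by rw [hB]; exact hπd
          simp only [Fin.lt_def, Fin.eta]
          omega
        · rw [if_neg ha1, if_neg hb1, dif_pos a.isLt, dif_pos b.isLt]
          simp only [Fin.lt_def, Fin.eta]
          omega
      · intro q hq hqd
        by_cases hqa : q < i - 1
        · have hqk : q < k := by omega
          refine ⟨i - 1 - q - 1, by omega, ?_⟩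
          have hmm : (q + (n - (i - 1)) + (i - 1 - q - 1)) % n = n - 1 :=
            mod_red (by omega) (by omega)
          rw [hmm, if_neg (show ¬(n - 1 = i - 1) by omega),
              dif_neg (show ¬(n - 1 < k) by omega), if_neg hqd, dif_pos hqk]
          have := hπpos q hqk hqd
          omega
        by_cases hqk : q < k
        · refine ⟨i - 1 + k - q, by omega, ?_⟩
          have hmm : (q + (n - (i - 1)) + (i - 1 + k - q)) % n = k :=
            mod_red (by omega) (by omega)
          rw [hmm, if_neg (show ¬(k = i - 1) by omega), dif_neg (lt_irrefl k),
              if_neg hqd, dif_pos hqk]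
          have := hπpos q hqk hqd
          omega
        by_cases hqn : q < n - 1
        · refine ⟨i, by omega, ?_⟩
          have hmm : (q + (n - (i - 1)) + i) % n = q + 1 :=
            mod_red (by omega) (by omega)
          rw [hmm, if_neg (show ¬(q + 1 = i - 1) by omega),
              dif_neg (show ¬(q + 1 < k) by omega), if_neg hqd, dif_neg hqk]
          omega
        · refine ⟨2 * (i - 1) + 1, by omega, ?_⟩
          have hmm : (q + (n - (i - 1)) + (2 * (i - 1) + 1)) % n = i - 1 :=
            mod_red (by omega) (by omega)
          rw [hmm, if_pos rfl, if_neg hqd, dif_neg hqk]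
          omega
    · -- Design 4 : top values on the block, increasing run
      have hhigh : k + 2 ≤ 2 * i := by omega
      apply key_s16 hi hik hkn π
        (fun x => if x = i - 1 then 0 else if h : x < k then n - k + (π ⟨x, h⟩).val else x - k + 1)
      · intro x hx
        by_cases h1 : x = i - 1
        · rw [if_pos h1]; omega
        rw [if_neg h1]
        by_cases h2 : x < k
        · rw [dif_pos h2]; have := (π ⟨x, h2⟩).isLt; omega
        · rw [dif_neg h2]; omega
      · intro x hx y hy hf
        by_cases hx1 : x = i - 1 <;> by_cases hy1 : y = i - 1
        · omega
        · exfalso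
          rw [if_pos hx1, if_neg hy1] at hf
          by_cases hy2 : y < k
          · rw [dif_pos hy2] at hf
            have := hπpos y hy2 hy1; omega
          · rw [dif_neg hy2] at hf; omega
        · exfalso
          rw [if_neg hx1, if_pos hy1] at hf
          by_cases hx2 : x < k
          · rw [dif_pos hx2] at hf
            have := hπpos x hx2 hx1; omega
          · rw [dif_neg hx2] at hf; omega
        · rw [if_neg hx1, if_neg hy1] at hf
          by_cases hx2 : x < k <;> by_cases hy2 : y < k
          · rw [dif_pos hx2, dif_pos hy2] at hf
            have h3 : (π ⟨x, hx2⟩).val = (π ⟨y, hy2⟩).val := by omega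
            exact congrArg Fin.val (π.injective (Fin.ext h3))
          · rw [dif_pos hx2, dif_neg hy2] at hf
            have := hπpos x hx2 hx1; omega
          · rw [dif_neg hx2, dif_pos hy2] at hf
            have := hπpos y hy2 hy1; omega
          · rw [dif_neg hx2, dif_neg hy2] at hf; omega
      · intro a b
        by_cases ha1 : a.val = i - 1 <;> by_cases hb1 : b.val = i - 1
        · have hA : a = ⟨i - 1, hdk⟩ := Fin.ext ha1
          have hB : b = ⟨i - 1, hdk⟩ := Fin.ext hb1
          rw [hA, hB]
          exact iff_of_false (lt_irrefl _) (lt_irrefl _)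
        · have hA : a = ⟨i - 1, hdk⟩ := Fin.ext ha1
          rw [if_pos ha1, if_neg hb1, dif_pos b.isLt]
          have h1 := hπpos b.val b.isLt hb1
          rw [Fin.eta] at h1
          have h2 : (π a).val = 0 := by rw [hA]; exact hπd
          simp only [Fin.lt_def, Fin.eta]
          omega
        · have hB : b = ⟨i - 1, hdk⟩ := Fin.ext hb1
          rw [if_neg ha1, if_pos hb1, dif_pos a.isLt]
          have h1 := hπpos a.val a.isLt ha1
          rw [Fin.eta] at h1
          have h2 : (π b).val = 0 := by rw [hB]; exact hπd
          simp only [Fin.lt_def, Fin.eta]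
          omega
        · rw [if_neg ha1, if_neg hb1, dif_pos a.isLt, dif_pos b.isLt]
          simp only [Fin.lt_def, Fin.eta]
          omega
      · intro q hq hqd
        by_cases hqa : q < i - 1
        · have hqk : q < k := by omega
          refine ⟨i - 1 - q - 1, by omega, ?_⟩
          have hmm : (q + (n - (i - 1)) + (i - 1 - q - 1)) % n = n - 1 :=
            mod_red (by omega) (by omega)
          rw [hmm, if_neg (show ¬(n - 1 = i - 1) by omega),
              dif_neg (show ¬(n - 1 < k) by omega), if_neg hqd, dif_pos hqk]
          have := hπpos q hqk hqd
          omega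
        by_cases hqk : q < k
        · refine ⟨i - 1 + k - q, by omega, ?_⟩
          have hmm : (q + (n - (i - 1)) + (i - 1 + k - q)) % n = k :=
            mod_red (by omega) (by omega)
          rw [hmm, if_neg (show ¬(k = i - 1) by omega), dif_neg (lt_irrefl k),
              if_neg hqd, dif_pos hqk]
          have := hπpos q hqk hqd
          omega
        by_cases hqe : q = k
        · refine ⟨2 * (i - 1) - k, by omega, ?_⟩
          have hmm : (q + (n - (i - 1)) + (2 * (i - 1) - k)) % n = i - 1 :=
            mod_red (by omega) (by omega)
          rw [hmm, if_pos rfl, if_neg hqd, dif_neg hqk]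
          omega
        · refine ⟨i - 2, by omega, ?_⟩
          have hmm : (q + (n - (i - 1)) + (i - 2)) % n = q - 1 :=
            mod_red (by omega) (by omega)
          rw [hmm, if_neg (show ¬(q - 1 = i - 1) by omega),
              dif_neg (show ¬(q - 1 < k) by omega), if_neg hqd, dif_neg hqk]
          omega
end

section
/- For every k ≥ 1, any subset Π of S_k (viewed as consecutive cyclic patterns of length k) with |Π| ≥ k! − k + 1 is unavoidable: no cyclic permutation of length n ≥ k avoids all patterns in Π. -/
/-- Any injective map from `Fin k` to a linear order has an order-isomorphic
pattern (its "standardization"). -/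
lemma exists_pattern {k : ℕ} {α : Type*} [LinearOrder α] (f : Fin k → α)
    (hf : Function.Injective f) :
    ∃ π : Equiv.Perm (Fin k), ∀ a b : Fin k, (f a < f b ↔ π a < π b) := by
  classical
  set s : Finset α := Finset.univ.image f with hs
  have hcard : s.card = k := by
    rw [hs, Finset.card_image_of_injective _ hf, Finset.card_univ, Fintype.card_fin]
  let e := s.orderIsoOfFin hcard
  have hmem : ∀ a : Fin k, f a ∈ s := fun a => Finset.mem_image_of_mem f (Finset.mem_univ a)
  let g : Fin k → Fin k := fun a => e.symm ⟨f a, hmem a⟩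
  have hg : Function.Injective g := by
    intro a b hab
    have := e.symm.injective hab
    exact hf (Subtype.mk_eq_mk.mp this)
  have hbij : Function.Bijective g := Finite.injective_iff_bijective.mp hg
  refine ⟨Equiv.ofBijective g hbij, fun a b => ?_⟩
  have : g a < g b ↔ f a < f b := by
    simp only [g, e.symm.lt_iff_lt, Subtype.mk_lt_mk]
  exact this.symm

/-- any set of at least `k! - k + 1` consecutive cyclic patterns of
length `k` is unavoidable: every cyclic permutation of length `n ≥ k` contains
one of them as `k` cyclically consecutive entries. -/
theorem stmt17 (k : ℕ) (hk : 1 ≤ k) (Pat : Finset (Equiv.Perm (Fin k)))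
    (hcard : Nat.factorial k - k + 1 ≤ Pat.card) (n : ℕ) (hn : k ≤ n)
    (σ : Equiv.Perm (Fin n)) :
    ∃ π ∈ Pat, ∃ p : Fin n, WindowIso σ p π := by
  classical
  have hn1 : 1 ≤ n := le_trans hk hn
  set z : Fin k := ⟨0, hk⟩ with hz
  -- Step 1: find i such that every pattern sending i to z is in Pat
  have hstep1 : ∃ i : Fin k, ∀ π : Equiv.Perm (Fin k), π i = z → π ∈ Pat := by
    by_contra hcon
    push_neg at hcon
    choose h hmin hout using hcon
    have hinj : Function.Injective h := by
      intro a b hab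
      have ha : (h a)⁻¹ z = a := by rw [← hmin a]; simp
      rw [hab, ← hmin b] at ha
      simpa using ha.symm
    have hsub : Finset.univ.image h ⊆ Patᶜ := by
      intro x hx
      simp only [Finset.mem_image, Finset.mem_univ, true_and] at hx
      obtain ⟨a, rfl⟩ := hx
      simpa using hout a
    have h1 : k ≤ Patᶜ.card := by
      calc k = (Finset.univ.image h).card := by
              rw [Finset.card_image_of_injective _ hinj, Finset.card_univ, Fintype.card_fin]
        _ ≤ Patᶜ.card := Finset.card_le_card hsub
    have h2 : Patᶜ.card = Nat.factorial k - Pat.card := by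
      rw [Finset.card_compl, Fintype.card_perm, Fintype.card_fin]
    have h3 : Pat.card ≤ Nat.factorial k := by
      calc Pat.card ≤ Finset.univ.card := Finset.card_le_card (Finset.subset_univ _)
        _ = Nat.factorial k := by rw [Finset.card_univ, Fintype.card_perm, Fintype.card_fin]
    have h4 : k ≤ Nat.factorial k := Nat.self_le_factorial k
    omega
  obtain ⟨i, hi⟩ := hstep1
  -- Step 2: the position of the global minimum of σ
  set q : Fin n := σ.symm ⟨0, hn1⟩ with hq
  set p : Fin n := ⟨(q.val + (n - i.val)) % n, Nat.mod_lt _ hn1⟩ with hp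
  have hcyci : cyc p i.val = q := by
    have hiv : i.val < n := lt_of_lt_of_le i.isLt hn
    have heq : (q.val + (n - i.val) + i.val) = q.val + n := by omega
    simp only [cyc, hp]
    apply Fin.ext
    simp only [Nat.mod_add_mod]
    rw [heq]
    simp [Nat.add_mod_right, Nat.mod_eq_of_lt q.isLt]
  -- the window map
  set f : Fin k → Fin n := fun a => σ (cyc p a.val) with hf
  have hcycinj : ∀ a b : Fin k, cyc p a.val = cyc p b.val → a = b := by
    intro a b hab
    have ha : a.val < n := lt_of_lt_of_le a.isLt hn
    have hb : b.val < n := lt_of_lt_of_le b.isLt hn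
    have h1 : (p.val + a.val) % n = (p.val + b.val) % n := congrArg Fin.val hab
    have h2 : a.val % n = b.val % n :=
      Nat.ModEq.add_left_cancel' p.val (h1 : (p.val + a.val) ≡ (p.val + b.val) [MOD n])
    rw [Nat.mod_eq_of_lt ha, Nat.mod_eq_of_lt hb] at h2
    exact Fin.ext h2
  have hfinj : Function.Injective f := by
    intro a b hab
    exact hcycinj a b (σ.injective hab)
  obtain ⟨π, hπ⟩ := exists_pattern f hfinj
  -- π i = z since f i = 0 is the global minimum
  have hfi : f i = ⟨0, hn1⟩ := by
    simp only [hf, hcyci, hq]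
    exact σ.apply_symm_apply _
  have hπi : π i = z := by
    by_contra hne
    have hpos : z < π i := by
      have : 0 < (π i).val := Nat.pos_of_ne_zero (fun h0 => hne (Fin.ext h0))
      exact this
    set j := π.symm z with hj
    have hlt : f j < f i := by
      rw [hπ]
      simpa [hj] using hpos
    rw [hfi] at hlt
    exact Nat.not_lt_zero _ hlt
  exact ⟨π, hi π hπi, p, fun a b => hπ a b⟩
end

section
/- For every k ≥ 1, the set Π = S_k \ {rotations of the identity permutation 12⋯k}, viewed as consecutive cyclic patterns of length k, is avoidable: for every n ≥ k, the cyclic class of the increasing permutation 1, 2, …, n contains no pattern of Π as k cyclically consecutive entries. Consequently the maximum cardinality of an avoidable subset of S_k (as consecutive cyclic patterns) is exactly k! − k. -/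
/-- `π` is one of the `k` cyclic rotations of the identity pattern `12⋯k`. -/
def IsIdRotation {k : ℕ} (π : Equiv.Perm (Fin k)) : Prop :=
  ∃ r : ℕ, ∀ j : Fin k, (π j).val = (j.val + r) % k

/-- A set of consecutive cyclic patterns of length `k` is avoidable if there are
cyclic permutations of arbitrarily large length (at least `k`) avoiding all of
its patterns. -/
def AvoidableSet (k : ℕ) (Pat : Set (Equiv.Perm (Fin k))) : Prop :=
  ∀ N : ℕ, ∃ n : ℕ, N ≤ n ∧ k ≤ n ∧ ∃ σ : Equiv.Perm (Fin n),
    ∀ π ∈ Pat, ∀ p : Fin n, ¬ WindowIso σ p π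

open Finset

lemma cyc_inj {n k : ℕ} (hkn : k ≤ n) (p : Fin n) {a b : Fin k}
    (h : cyc p a.val = cyc p b.val) : a = b := by
  have h' : (p.val + a.val) % n = (p.val + b.val) % n := congrArg Fin.val h
  have h2 : a.val % n = b.val % n := Nat.ModEq.add_left_cancel' p.val h'
  rw [Nat.mod_eq_of_lt (lt_of_lt_of_le a.isLt hkn),
    Nat.mod_eq_of_lt (lt_of_lt_of_le b.isLt hkn)] at h2
  exact Fin.ext h2

lemma rank_of_perm {k : ℕ} (π : Equiv.Perm (Fin k)) (a : Fin k) :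
    (π a).val = (univ.filter fun b => π b < π a).card := by
  have he : (univ.filter fun b => π b < π a) = (Finset.Iio (π a)).map π.symm.toEmbedding := by
    ext b
    simp only [mem_filter, mem_univ, true_and, Finset.mem_map, Finset.mem_Iio,
      Equiv.coe_toEmbedding]
    constructor
    · intro hb; exact ⟨π b, hb, π.symm_apply_apply b⟩
    · rintro ⟨c, hc, rfl⟩; rwa [π.apply_symm_apply]
  rw [he, Finset.card_map, Fin.card_Iio]

open Fin.NatCast in
lemma rotPerm_aux {k : ℕ} (hk : 0 < k) (r : ℕ) (j : Fin k) :
    haveI : NeZero k := ⟨hk.ne'⟩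
    ((j + (r : Fin k)) : Fin k).val = (j.val + r) % k := by
  haveI : NeZero k := ⟨hk.ne'⟩
  rw [Fin.val_add, Fin.val_natCast, Nat.add_mod_mod]

open Fin.NatCast in
/-- rotation by `r` as a permutation -/
def rotPerm {k : ℕ} (hk : 0 < k) (r : ℕ) : Equiv.Perm (Fin k) :=
  haveI : NeZero k := ⟨hk.ne'⟩
  Equiv.addRight (r : Fin k)

open Fin.NatCast in
lemma rotPerm_val {k : ℕ} (hk : 0 < k) (r : ℕ) (j : Fin k) :
    (rotPerm hk r j).val = (j.val + r) % k := by
  haveI : NeZero k := ⟨hk.ne'⟩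
  have : rotPerm hk r j = j + (r : Fin k) := rfl
  rw [this, rotPerm_aux hk]

lemma key_iff {n k : ℕ} (hk : 0 < k) (hkn : k ≤ n) (p : Fin n) (a b : Fin k) :
    ((p.val + a.val) % n < (p.val + b.val) % n) ↔
      ((a.val + (k - min k (n - p.val))) % k < (b.val + (k - min k (n - p.val))) % k) := by
  have hp := p.isLt
  have ha := a.isLt; have hb := b.isLt
  have hv : ∀ x : ℕ, x < k → (p.val + x) % n =
      if p.val + x < n then p.val + x else p.val + x - n := by
    intro x hx
    split
    · exact Nat.mod_eq_of_lt ‹_›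
    · rw [Nat.mod_eq_sub_mod (by omega), Nat.mod_eq_of_lt (by omega)]
  have hw : ∀ x : ℕ, x < k → (x + (k - min k (n - p.val))) % k =
      if x + (k - min k (n - p.val)) < k then x + (k - min k (n - p.val))
      else x + (k - min k (n - p.val)) - k := by
    intro x hx
    split
    · exact Nat.mod_eq_of_lt ‹_›
    · rw [Nat.mod_eq_sub_mod (by omega), Nat.mod_eq_of_lt (by omega)]
  rw [hv a.val ha, hv b.val hb, hw a.val ha, hw b.val hb]
  split_ifs <;> omega

lemma windowIso_id {n k : ℕ} (hk : 0 < k) (hkn : k ≤ n) (p : Fin n)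
    (π : Equiv.Perm (Fin k))
    (h : WindowIso (1 : Equiv.Perm (Fin n)) p π) : IsIdRotation π := by
  set r := k - min k (n - p.val) with hr
  refine ⟨r, fun j => ?_⟩
  have key : ∀ a b : Fin k, π a < π b ↔ rotPerm hk r a < rotPerm hk r b := by
    intro a b
    rw [← h a b]
    have h1 : (1 : Equiv.Perm (Fin n)) (cyc p a.val) = cyc p a.val := rfl
    have h2 : (1 : Equiv.Perm (Fin n)) (cyc p b.val) = cyc p b.val := rfl
    rw [h1, h2, Fin.lt_def, Fin.lt_def, rotPerm_val, rotPerm_val]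
    exact key_iff hk hkn p a b
  have : (π j).val = (rotPerm hk r j).val := by
    rw [rank_of_perm π j, rank_of_perm (rotPerm hk r) j]
    congr 1
    apply Finset.filter_congr
    intro b _
    simpa using key b j
  rw [this, rotPerm_val]

def rankFun {n k : ℕ} (f : Fin k → Fin n) (i : Fin k) : ℕ :=
  (univ.filter fun b => f b < f i).card

lemma rankFun_lt {n k : ℕ} (hk : 0 < k) (f : Fin k → Fin n) (i : Fin k) :
    rankFun f i < k := by
  have hsub : (univ.filter fun b => f b < f i) ⊆ univ.erase i := by
    intro b hb
    simp only [mem_filter, mem_univ, true_and] at hb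
    simp only [Finset.mem_erase, mem_univ, and_true]
    rintro rfl; exact lt_irrefl _ hb
  have := Finset.card_le_card hsub
  rw [Finset.card_erase_of_mem (mem_univ i), Finset.card_univ, Fintype.card_fin] at this
  unfold rankFun
  omega

def ptnFun {n k : ℕ} (hk : 0 < k) (f : Fin k → Fin n) (i : Fin k) : Fin k :=
  ⟨rankFun f i, rankFun_lt hk f i⟩

lemma ptn_mono {n k : ℕ} (hk : 0 < k) (f : Fin k → Fin n) {a b : Fin k}
    (hab : f a < f b) : ptnFun hk f a < ptnFun hk f b := by
  rw [Fin.lt_def]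
  show (univ.filter fun c => f c < f a).card < (univ.filter fun c => f c < f b).card
  apply Finset.card_lt_card
  constructor
  · intro c hc
    simp only [mem_filter, mem_univ, true_and] at hc ⊢
    exact hc.trans hab
  · intro hsub
    have h1 : a ∈ univ.filter fun c => f c < f b := by
      simp only [mem_filter, mem_univ, true_and]; exact hab
    have h2 := hsub h1
    simp only [mem_filter, mem_univ, true_and] at h2
    exact lt_irrefl _ h2

lemma ptn_iff {n k : ℕ} (hk : 0 < k) {f : Fin k → Fin n} (hf : Function.Injective f)
    (a b : Fin k) : f a < f b ↔ ptnFun hk f a < ptnFun hk f b := by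
  constructor
  · exact fun h => ptn_mono hk f h
  · intro hr
    by_contra hab
    push_neg at hab
    rcases eq_or_lt_of_le hab with h | h
    · rw [hf h] at hr; exact lt_irrefl _ hr
    · exact absurd hr (lt_asymm (ptn_mono hk f h))

lemma ptn_inj {n k : ℕ} (hk : 0 < k) {f : Fin k → Fin n} (hf : Function.Injective f) :
    Function.Injective (ptnFun hk f) := by
  intro a b hab
  apply hf
  rcases lt_trichotomy (f a) (f b) with h | h | h
  · exact absurd (ptn_mono hk f h) (by rw [hab]; exact lt_irrefl _)
  · exact h
  · exact absurd (ptn_mono hk f h) (by rw [hab]; exact lt_irrefl _)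

noncomputable def ptnPerm {n k : ℕ} (hk : 0 < k) (f : Fin k → Fin n) (hf : Function.Injective f) :
    Equiv.Perm (Fin k) :=
  Equiv.ofBijective (ptnFun hk f) (Finite.injective_iff_bijective.mp (ptn_inj hk hf))

lemma ptnPerm_apply {n k : ℕ} (hk : 0 < k) (f : Fin k → Fin n)
    (hf : Function.Injective f) (i : Fin k) : ptnPerm hk f hf i = ptnFun hk f i := rfl

lemma ptnPerm_max {n k : ℕ} (hk : 0 < k) (f : Fin k → Fin n)
    (hf : Function.Injective f) (j : Fin k) (hmax : ∀ i : Fin k, i ≠ j → f i < f j) :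
    (ptnPerm hk f hf j).val = k - 1 := by
  rw [ptnPerm_apply]
  show rankFun f j = k - 1
  unfold rankFun
  have he : (univ.filter fun b => f b < f j) = univ.erase j := by
    ext b
    simp only [mem_filter, mem_univ, true_and, Finset.mem_erase, and_true]
    constructor
    · rintro hb rfl; exact lt_irrefl _ hb
    · exact fun hb => hmax b hb
  rw [he, Finset.card_erase_of_mem (mem_univ j), Finset.card_univ, Fintype.card_fin]

lemma windowIso_ptn {n k : ℕ} (hk : 0 < k) (hkn : k ≤ n) (σ : Equiv.Perm (Fin n))
    (p : Fin n) :
    WindowIso σ p (ptnPerm hk (fun i : Fin k => σ (cyc p i.val))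
      (fun a b hab => cyc_inj hkn p (σ.injective hab))) := by
  intro a b
  show _ ↔ ptnFun hk (fun i : Fin k => σ (cyc p i.val)) a < ptnFun hk (fun i : Fin k => σ (cyc p i.val)) b
  exact ptn_iff hk (fun a b hab => cyc_inj hkn p (σ.injective hab)) a b

open Classical in
lemma card_filter_isIdRotation {k : ℕ} (hk : 0 < k) :
    (univ.filter fun π : Equiv.Perm (Fin k) => IsIdRotation π).card = k := by
  have he : (univ.filter fun π : Equiv.Perm (Fin k) => IsIdRotation π)
      = Finset.image (fun j : Fin k => rotPerm hk j.val) univ := by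
    ext π
    simp only [mem_filter, mem_univ, true_and, Finset.mem_image]
    constructor
    · rintro ⟨r, hr⟩
      refine ⟨⟨r % k, Nat.mod_lt _ hk⟩, ?_⟩
      apply Equiv.ext; intro x
      apply Fin.ext
      rw [rotPerm_val, hr x]
      exact Nat.add_mod_mod x.val r k
    · rintro ⟨j, rfl⟩
      exact ⟨j.val, fun x => rotPerm_val hk j.val x⟩
  have hinj : Function.Injective (fun j : Fin k => rotPerm hk j.val) := by
    intro j j' hjj
    have h0 := congrArg (fun e : Equiv.Perm (Fin k) => (e ⟨0, hk⟩).val) hjj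
    simp only [rotPerm_val] at h0
    apply Fin.ext
    rw [Nat.zero_add, Nat.zero_add, Nat.mod_eq_of_lt j.isLt, Nat.mod_eq_of_lt j'.isLt] at h0
    exact h0
  rw [he, Finset.card_image_of_injective _ hinj, Finset.card_univ, Fintype.card_fin]

/-- for `k ≥ 1`, the increasing cyclic permutation of any length
`n ≥ k` contains only rotations of the identity as consecutive cyclic patterns of
length `k` (so `S_k` minus the `k` rotations of the identity is avoidable);
consequently the maximum cardinality of an avoidable set of consecutive cyclic
patterns of length `k` is exactly `k! - k`. -/
theorem stmt18 (k : ℕ) (hk : 1 ≤ k) :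
    (∀ n, k ≤ n → ∀ (p : Fin n) (π : Equiv.Perm (Fin k)),
      WindowIso (1 : Equiv.Perm (Fin n)) p π → IsIdRotation π) ∧
    IsGreatest {m : ℕ | ∃ Pat : Finset (Equiv.Perm (Fin k)),
        Pat.card = m ∧ AvoidableSet k ↑Pat} (Nat.factorial k - k) := by
  classical
  have hk0 : 0 < k := hk
  refine ⟨fun n hn p π h => windowIso_id hk0 hn p π h, ?_, ?_⟩
  · -- membership
    refine ⟨univ.filter fun π => ¬ IsIdRotation π, ?_, ?_⟩
    · have hsum := Finset.card_filter_add_card_filter_not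
        (s := (univ : Finset (Equiv.Perm (Fin k)))) (p := fun π => IsIdRotation π)
      rw [card_filter_isIdRotation hk0, Finset.card_univ, Fintype.card_perm,
        Fintype.card_fin] at hsum
      have hconv : (univ.filter fun π : Equiv.Perm (Fin k) => ¬ IsIdRotation π).card
          = (Finset.filter (fun π : Equiv.Perm (Fin k) => ¬ IsIdRotation π) univ).card := rfl
      omega
    · intro N
      refine ⟨max N k, le_max_left _ _, le_max_right _ _, 1, ?_⟩
      intro π hπ p hw
      simp only [Finset.coe_filter, Set.mem_setOf_eq, mem_univ, true_and] at hπ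
      exact hπ (windowIso_id hk0 (le_max_right _ _) p π hw)
  · -- upper bound
    rintro m ⟨Pat, rfl, havoid⟩
    obtain ⟨n, hNn, hkn, σ, hσ⟩ := havoid k
    have hn1 : 1 ≤ n := le_trans hk hkn
    set M : Fin n := ⟨n - 1, by omega⟩ with hM
    set mpos : Fin n := σ.symm M with hmpos
    set P : Fin k → Fin n :=
      fun j => ⟨(mpos.val + (n - j.val)) % n, Nat.mod_lt _ (by omega)⟩ with hP
    have hcycP : ∀ j : Fin k, cyc (P j) j.val = mpos := by
      intro j
      apply Fin.ext
      show ((mpos.val + (n - j.val)) % n + j.val) % n = mpos.val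
      rw [Nat.mod_add_mod]
      have hj : j.val ≤ n := le_of_lt (lt_of_lt_of_le j.isLt hkn)
      have heq : mpos.val + (n - j.val) + j.val = mpos.val + n := by omega
      rw [heq, Nat.add_mod_right, Nat.mod_eq_of_lt mpos.isLt]
    have hfinj : ∀ j : Fin k, Function.Injective (fun i : Fin k => σ (cyc (P j) i.val)) :=
      fun j a b hab => cyc_inj hkn (P j) (σ.injective hab)
    set g : Fin k → Equiv.Perm (Fin k) := fun j => ptnPerm hk0 _ (hfinj j) with hg
    have hmaxval : ∀ j i : Fin k, i ≠ j →
        (fun i : Fin k => σ (cyc (P j) i.val)) i < (fun i : Fin k => σ (cyc (P j) i.val)) j := by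
      intro j i hij
      simp only
      have hj : σ (cyc (P j) j.val) = M := by rw [hcycP j]; exact σ.apply_symm_apply M
      rw [hj]
      have hne : σ (cyc (P j) i.val) ≠ M := by
        intro hEq
        exact hij (cyc_inj hkn (P j) (σ.injective (hEq.trans hj.symm)))
      have hlt := (σ (cyc (P j) i.val)).isLt
      have hne' : (σ (cyc (P j) i.val)).val ≠ n - 1 := fun hc => hne (Fin.ext hc)
      rw [Fin.lt_def]
      show _ < n - 1
      omega
    have hgmax : ∀ j : Fin k, (g j j).val = k - 1 :=
      fun j => ptnPerm_max hk0 _ (hfinj j) j (fun i hij => hmaxval j i hij)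
    have hginj : Function.Injective g := by
      intro j j' hjj
      have h1 : (g j j').val = k - 1 := by rw [hjj]; exact hgmax j'
      have h2 : g j j' = g j j := Fin.ext (by rw [h1, hgmax j])
      exact ((g j).injective h2).symm ▸ rfl
    have hgnot : ∀ j : Fin k, g j ∉ Pat := by
      intro j hmem
      exact hσ (g j) hmem (P j) (windowIso_ptn hk0 hkn σ (P j))
    have hcard : k ≤ (univ.filter fun π : Equiv.Perm (Fin k) => π ∉ Pat).card := by
      have hmaps : ∀ j : Fin k, j ∈ (univ : Finset (Fin k)) →
          g j ∈ univ.filter fun π : Equiv.Perm (Fin k) => π ∉ Pat := by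
        intro j _
        simp only [mem_filter, mem_univ, true_and]
        exact hgnot j
      have := Finset.card_le_card_of_injOn g hmaps hginj.injOn
      rwa [Finset.card_univ, Fintype.card_fin] at this
    have hsum := Finset.card_filter_add_card_filter_not
      (s := (univ : Finset (Equiv.Perm (Fin k)))) (p := fun π => π ∈ Pat)
    rw [Finset.card_univ, Fintype.card_perm, Fintype.card_fin] at hsum
    have hPat : (univ.filter fun π : Equiv.Perm (Fin k) => π ∈ Pat) = Pat := by
      ext π; simp
    rw [hPat] at hsum
    omega
end

section
/- Let π ∈ S_k and let [π̄] denote the set of k rotations of π viewed as consecutive cyclic patterns. Then Π = S_k \ [π̄] is avoidable: for every multiple n = mk of k, there exists a cyclic permutation of length n all of whose windows of k cyclically consecutive entries are order isomorphic to some rotation of π. Explicitly, σ given by σ_{(j-1)k + t} = m(π_t − 1) + j for 1 ≤ j ≤ m and 1 ≤ t ≤ k works. -/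
private lemma key_ineq (m x y j1 j2 : ℕ) (hj1 : j1 < m) (hj2 : j2 < m) (hxy : x ≠ y) :
    m * x + j1 < m * y + j2 ↔ x < y := by
  constructor
  · intro h
    rcases Nat.lt_or_ge x y with h' | h'
    · exact h'
    · exfalso
      have hy : y < x := lt_of_le_of_ne h' (Ne.symm hxy)
      have h2 := Nat.mul_le_mul_left m (Nat.succ_le_of_lt hy)
      rw [Nat.mul_succ] at h2
      omega
  · intro h
    have h2 := Nat.mul_le_mul_left m (Nat.succ_le_of_lt h)
    rw [Nat.mul_succ] at h2
    omega

private def fwd (k m : ℕ) (hk : 1 ≤ k) (hm : 1 ≤ m) (π : Equiv.Perm (Fin k))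
    (q : Fin (m * k)) : Fin (m * k) :=
  ⟨m * (π ⟨q.val % k, Nat.mod_lt _ hk⟩).val + q.val / k, by
    have h1 := (π ⟨q.val % k, Nat.mod_lt _ hk⟩).isLt
    have h2 : q.val / k < m := Nat.div_lt_of_lt_mul (Nat.lt_of_lt_of_eq q.isLt (Nat.mul_comm m k))
    have h3 := Nat.mul_le_mul_left m (Nat.succ_le_of_lt h1)
    rw [Nat.mul_succ] at h3
    omega⟩

private def bwd (k m : ℕ) (hk : 1 ≤ k) (hm : 1 ≤ m) (π : Equiv.Perm (Fin k))
    (x : Fin (m * k)) : Fin (m * k) :=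
  ⟨(x.val % m) * k + (π.symm ⟨x.val / m, Nat.div_lt_of_lt_mul x.isLt⟩).val, by
    have h1 := (π.symm ⟨x.val / m, Nat.div_lt_of_lt_mul x.isLt⟩).isLt
    have h2 : x.val % m < m := Nat.mod_lt _ hm
    have h3 := Nat.mul_le_mul_right k (Nat.succ_le_of_lt h2)
    rw [Nat.succ_mul] at h3
    omega⟩

/-- for `π ∈ S_k` and `n = m k`, the cyclic permutation `σ` with
`σ_{(j-1)k + t} = m (π_t - 1) + j` (0-indexed: `σ q = m * π (q mod k) + q div k`)
has every window of `k` cyclically consecutive entries order isomorphic to some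
rotation of `π`; hence `S_k` minus the rotations of `π` is avoidable. -/
theorem stmt19 (k m : ℕ) (hk : 1 ≤ k) (hm : 1 ≤ m) (π : Equiv.Perm (Fin k)) :
    ∃ σ : Equiv.Perm (Fin (m * k)),
      (∀ q : Fin (m * k),
        (σ q).val = m * (π ⟨q.val % k, Nat.mod_lt _ hk⟩).val + q.val / k) ∧
      (∀ p : Fin (m * k), ∃ r : ℕ, ∀ a b : Fin k,
        (σ (cyc p a.val) < σ (cyc p b.val) ↔ π (cyc a r) < π (cyc b r))) := by
  have hmk : 0 < m * k := Nat.mul_pos hm hk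
  have left_inv : Function.LeftInverse (bwd k m hk hm π) (fwd k m hk hm π) := by
    intro q
    apply Fin.ext
    simp only [fwd, bwd]
    set t : Fin k := ⟨q.val % k, Nat.mod_lt _ hk⟩ with ht
    have hj : q.val / k < m := Nat.div_lt_of_lt_mul (Nat.lt_of_lt_of_eq q.isLt (Nat.mul_comm m k))
    have hmod : (m * (π t).val + q.val / k) % m = q.val / k := by
      rw [Nat.mul_add_mod, Nat.mod_eq_of_lt hj]
    have hdiv : (m * (π t).val + q.val / k) / m = (π t).val := by
      rw [Nat.mul_add_div hm, Nat.div_eq_of_lt hj, Nat.add_zero]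
    have hfin : (⟨(m * (π t).val + q.val / k) / m,
        Nat.div_lt_of_lt_mul (fwd k m hk hm π q).isLt⟩ : Fin k) = π t := Fin.ext hdiv
    rw [hmod, hfin, Equiv.symm_apply_apply]
    show q.val / k * k + q.val % k = q.val
    rw [Nat.div_add_mod']
  have right_inv : Function.RightInverse (bwd k m hk hm π) (fwd k m hk hm π) := by
    intro x
    apply Fin.ext
    simp only [fwd, bwd]
    set t : Fin k := π.symm ⟨x.val / m, Nat.div_lt_of_lt_mul x.isLt⟩ with ht
    have hmod : (x.val % m * k + t.val) % k = t.val := by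
      rw [Nat.mul_add_mod', Nat.mod_eq_of_lt t.isLt]
    have hdiv : (x.val % m * k + t.val) / k = x.val % m := by
      rw [Nat.mul_comm (x.val % m) k, Nat.mul_add_div hk, Nat.div_eq_of_lt t.isLt,
        Nat.add_zero]
    have hfin : (⟨(x.val % m * k + t.val) % k, Nat.mod_lt _ hk⟩ : Fin k) = t := Fin.ext hmod
    rw [hfin, hdiv, ht, Equiv.apply_symm_apply]
    show m * (x.val / m) + x.val % m = x.val
    rw [Nat.div_add_mod]
  refine ⟨⟨fwd k m hk hm π, bwd k m hk hm π, left_inv, right_inv⟩, fun q => rfl, ?_⟩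
  intro p
  refine ⟨p.val % k, ?_⟩
  intro a b
  -- the index of the window position
  have hidx : ∀ a : Fin k,
      (⟨(cyc p a.val).val % k, Nat.mod_lt _ hk⟩ : Fin k) = cyc a (p.val % k) := by
    intro a
    apply Fin.ext
    show ((p.val + a.val) % (m * k)) % k = (a.val + p.val % k) % k
    rw [Nat.mod_mod_of_dvd _ (dvd_mul_left k m)]
    calc (p.val + a.val) % k = (a.val + p.val) % k := by rw [Nat.add_comm]
      _ = (a.val + p.val % k) % k := ((Nat.mod_modEq p.val k).add_left a.val).symm
  have hval : ∀ a : Fin k,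
      (fwd k m hk hm π (cyc p a.val)).val
        = m * (π (cyc a (p.val % k))).val + (cyc p a.val).val / k := by
    intro a
    show m * (π ⟨(cyc p a.val).val % k, Nat.mod_lt _ hk⟩).val + (cyc p a.val).val / k = _
    rw [hidx a]
  show fwd k m hk hm π (cyc p a.val) < fwd k m hk hm π (cyc p b.val) ↔ _
  rw [Fin.lt_def, Fin.lt_def, hval a, hval b]
  rcases eq_or_ne a b with rfl | hab
  · simp
  · have hne : (π (cyc a (p.val % k))).val ≠ (π (cyc b (p.val % k))).val := by
      intro h
      apply hab
      have h1 : cyc a (p.val % k) = cyc b (p.val % k) :=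
        π.injective (Fin.ext h)
      have h2 : (a.val + p.val % k) % k = (b.val + p.val % k) % k := congrArg Fin.val h1
      have h3 : a.val % k = b.val % k :=
        Nat.ModEq.add_right_cancel' (p.val % k) h2
      exact Fin.ext (by rwa [Nat.mod_eq_of_lt a.isLt, Nat.mod_eq_of_lt b.isLt] at h3)
    exact key_ineq m _ _ _ _
      (Nat.div_lt_of_lt_mul (Nat.lt_of_lt_of_eq (cyc p a.val).isLt (Nat.mul_comm m k)))
      (Nat.div_lt_of_lt_mul (Nat.lt_of_lt_of_eq (cyc p b.val).isLt (Nat.mul_comm m k))) hne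
end
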